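/- arXiv:2409.19259 — 5 statements merged into one kernel-verified Lean document; each statement's English description precedes it below -/
import Mathlib

section
/- Let w satisfy Assumption (W) and let h(x) = ∫_ℝ e^{xz} w'(Φ(z)) φ(z) dz. Then h(0) = 1 and h(x) < ∞ for every x ∈ ℝ. -/
open MeasureTheory Set Filter Topology

/-- The standard normal density φ. -/
noncomputable def stdGaussianPdf (z : ℝ) : ℝ :=
  (Real.sqrt (2 * Real.pi))⁻¹ * Real.exp (-(z ^ 2) / 2)

/-- The standard normal cumulative distribution function Φ. -/
noncomputable def stdGaussianCdf (x : ℝ) : ℝ :=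
  ∫ z in Set.Iic x, stdGaussianPdf z

/-- Assumption (W) on a probability weighting function `w` with derivative `w'`. -/
structure AssumptionW (w w' : ℝ → ℝ) : Prop where
  mono : StrictMonoOn w (Set.Icc 0 1)
  deriv : ∀ p ∈ Set.Icc (0:ℝ) 1, HasDerivWithinAt w (w' p) (Set.Icc 0 1) p
  contDeriv : ContinuousOn w' (Set.Icc 0 1)
  zero : w 0 = 0
  one : w 1 = 1
  growth : ∃ c > 0, ∃ α ∈ Set.Ioo (-1 : ℝ) 0,
    ∀ p ∈ Set.Ioo (0:ℝ) 1, w' p ≤ c * (p ^ α + (1 - p) ^ α)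

/-- `hInt w' x = ∫_ℝ e^{xz} w'(Φ(z)) φ(z) dz`. -/
noncomputable def hInt (w' : ℝ → ℝ) (x : ℝ) : ℝ :=
  ∫ z, Real.exp (x * z) * w' (stdGaussianCdf z) * stdGaussianPdf z

lemma pdf_pos (z : ℝ) : 0 < stdGaussianPdf z := by
  unfold stdGaussianPdf; positivity

lemma pdf_cont : Continuous stdGaussianPdf := by
  unfold stdGaussianPdf; continuity

lemma pdf_integrable : Integrable stdGaussianPdf := by
  unfold stdGaussianPdf
  refine Integrable.const_mul ?_ _
  have : ∀ z : ℝ, -(z^2)/2 = -(1/2 : ℝ) * z^2 := fun z => by ring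
  simp_rw [this]
  exact integrable_exp_neg_mul_sq (by norm_num)

lemma pdf_integral : ∫ z, stdGaussianPdf z = 1 := by
  unfold stdGaussianPdf
  rw [MeasureTheory.integral_const_mul]
  have : ∀ z : ℝ, -(z^2)/2 = -(1/2 : ℝ) * z^2 := fun z => by ring
  simp_rw [this, integral_gaussian]
  rw [show Real.pi / (1/2) = 2 * Real.pi by ring]
  rw [inv_mul_cancel₀]
  positivity

lemma cdf_eq (x : ℝ) : stdGaussianCdf x = stdGaussianCdf 0 + ∫ t in (0:ℝ)..x, stdGaussianPdf t := by
  have := intervalIntegral.integral_Iic_sub_Iic (μ := volume) (f := stdGaussianPdf) (a := 0) (b := x)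
    pdf_integrable.integrableOn pdf_integrable.integrableOn
  unfold stdGaussianCdf
  linarith [this]

lemma cdf_hasDerivAt (x : ℝ) : HasDerivAt stdGaussianCdf (stdGaussianPdf x) x := by
  have h : HasDerivAt (fun u => stdGaussianCdf 0 + ∫ t in (0:ℝ)..u, stdGaussianPdf t)
      (stdGaussianPdf x) x :=
    ((pdf_cont.integral_hasStrictDerivAt 0 x).hasDerivAt).const_add _
  exact h.congr_of_eventuallyEq (Filter.Eventually.of_forall fun u => (cdf_eq u))

lemma cdf_cont : Continuous stdGaussianCdf := by
  have : Differentiable ℝ stdGaussianCdf := fun x => (cdf_hasDerivAt x).differentiableAt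
  exact this.continuous

lemma cdf_tendsto_atTop : Tendsto stdGaussianCdf atTop (𝓝 1) := by
  have h1 : Tendsto (fun x : ℝ => ∫ t in (0:ℝ)..x, stdGaussianPdf t) atTop
      (𝓝 (∫ t in Ioi (0:ℝ), stdGaussianPdf t)) :=
    intervalIntegral_tendsto_integral_Ioi 0 pdf_integrable.integrableOn tendsto_id
  have hsplit : stdGaussianCdf 0 + ∫ t in Ioi (0:ℝ), stdGaussianPdf t = 1 := by
    rw [← pdf_integral]
    unfold stdGaussianCdf
    rw [← MeasureTheory.setIntegral_union (Iic_disjoint_Ioi le_rfl) measurableSet_Ioi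
      pdf_integrable.integrableOn pdf_integrable.integrableOn, Set.Iic_union_Ioi,
      MeasureTheory.setIntegral_univ]
  have h2 := (tendsto_const_nhds (x := stdGaussianCdf 0) (f := atTop (α := ℝ))).add h1
  rw [hsplit] at h2
  exact h2.congr fun x => (cdf_eq x).symm

lemma cdf_tendsto_atBot : Tendsto stdGaussianCdf atBot (𝓝 0) := by
  have h1 : Tendsto (fun x : ℝ => ∫ t in x..(0:ℝ), stdGaussianPdf t) atBot
      (𝓝 (∫ t in Iic (0:ℝ), stdGaussianPdf t)) :=
    intervalIntegral_tendsto_integral_Iic 0 pdf_integrable.integrableOn tendsto_id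
  have h2 : Tendsto (fun x : ℝ => stdGaussianCdf 0 - ∫ t in x..(0:ℝ), stdGaussianPdf t) atBot
      (𝓝 (stdGaussianCdf 0 - ∫ t in Iic (0:ℝ), stdGaussianPdf t)) :=
    (tendsto_const_nhds).sub h1
  rw [show stdGaussianCdf 0 - ∫ t in Iic (0:ℝ), stdGaussianPdf t = 0 by
    unfold stdGaussianCdf; ring] at h2
  refine h2.congr fun x => ?_
  rw [cdf_eq x, intervalIntegral.integral_symm]
  ring

noncomputable def gaussLB (z : ℝ) : ℝ :=
  (Real.sqrt (2 * Real.pi))⁻¹ * Real.exp (-((|z| + 1) ^ 2) / 2)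

lemma gaussLB_pos (z : ℝ) : 0 < gaussLB z := by
  unfold gaussLB; positivity

lemma pdf_ge_on {z t : ℝ} (h : |t| ≤ |z| + 1) : gaussLB z ≤ stdGaussianPdf t := by
  unfold gaussLB stdGaussianPdf
  have h2 : t ^ 2 ≤ (|z| + 1) ^ 2 := by
    have := abs_nonneg t
    nlinarith [sq_abs t]
  have h3 : Real.exp (-(t^2)/2) ≥ Real.exp (-((|z|+1)^2)/2) := Real.exp_le_exp.mpr (by linarith)
  have h4 : (0:ℝ) < (Real.sqrt (2 * Real.pi))⁻¹ := by positivity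
  nlinarith [Real.exp_pos (-(t^2)/2)]

lemma cdf_lb (z : ℝ) : gaussLB z ≤ stdGaussianCdf z := by
  have hsub : Ioc (z - 1) z ⊆ Iic z := Ioc_subset_Iic_self
  have h1 : ∫ t in Ioc (z-1) z, stdGaussianPdf t ≤ stdGaussianCdf z := by
    refine setIntegral_mono_set pdf_integrable.integrableOn
      (Filter.Eventually.of_forall fun t => (pdf_pos t).le) (HasSubset.Subset.eventuallyLE hsub)
  refine le_trans ?_ h1
  have h2 : ∫ _ in Ioc (z-1) z, gaussLB z ≤ ∫ t in Ioc (z-1) z, stdGaussianPdf t := by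
    refine setIntegral_mono_on ((integrableOn_const_iff (C := gaussLB z)).mpr ?_) pdf_integrable.integrableOn
      measurableSet_Ioc fun t ht => ?_
    · right; rw [Real.volume_Ioc]; exact ENNReal.ofReal_lt_top
    · refine pdf_ge_on ?_
      rw [abs_le]
      constructor
      · have := neg_abs_le z; linarith [ht.1]
      · have := le_abs_self z; linarith [ht.2]
  have h3 : ∫ _ in Ioc (z-1) z, gaussLB z = gaussLB z := by
    rw [setIntegral_const, Real.volume_real_Ioc, show z - (z-1) = 1 by ring,
      max_eq_left zero_le_one, one_smul]
  linarith

lemma cdf_compl (z : ℝ) : 1 - stdGaussianCdf z = ∫ t in Ioi z, stdGaussianPdf t := by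
  have : stdGaussianCdf z + ∫ t in Ioi z, stdGaussianPdf t = 1 := by
    rw [← pdf_integral]
    unfold stdGaussianCdf
    rw [← MeasureTheory.setIntegral_union (Iic_disjoint_Ioi le_rfl) measurableSet_Ioi
      pdf_integrable.integrableOn pdf_integrable.integrableOn, Set.Iic_union_Ioi,
      MeasureTheory.setIntegral_univ]
  linarith

lemma cdf_ub (z : ℝ) : gaussLB z ≤ 1 - stdGaussianCdf z := by
  rw [cdf_compl]
  have h1 : ∫ t in Ioc z (z+1), stdGaussianPdf t ≤ ∫ t in Ioi z, stdGaussianPdf t := by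
    refine setIntegral_mono_set pdf_integrable.integrableOn
      (Filter.Eventually.of_forall fun t => (pdf_pos t).le)
      (HasSubset.Subset.eventuallyLE Ioc_subset_Ioi_self)
  refine le_trans ?_ h1
  have h2 : ∫ _ in Ioc z (z+1), gaussLB z ≤ ∫ t in Ioc z (z+1), stdGaussianPdf t := by
    refine setIntegral_mono_on ((integrableOn_const_iff (C := gaussLB z)).mpr ?_) pdf_integrable.integrableOn
      measurableSet_Ioc fun t ht => ?_
    · right; rw [Real.volume_Ioc]; exact ENNReal.ofReal_lt_top
    · refine pdf_ge_on ?_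
      rw [abs_le]
      constructor
      · have := neg_abs_le z; linarith [ht.1]
      · have := le_abs_self z; linarith [ht.2]
  have h3 : ∫ _ in Ioc z (z+1), gaussLB z = gaussLB z := by
    rw [setIntegral_const, Real.volume_real_Ioc, show z + 1 - z = 1 by ring,
      max_eq_left zero_le_one, one_smul]
  linarith

lemma cdf_mem_Ioo (z : ℝ) : stdGaussianCdf z ∈ Ioo (0:ℝ) 1 := by
  constructor
  · exact lt_of_lt_of_le (gaussLB_pos z) (cdf_lb z)
  · have := cdf_ub z; have := gaussLB_pos z; linarith

lemma integrable_exp_lin_sub_sq {b : ℝ} (c : ℝ) (hb : 0 < b) :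
    Integrable (fun z : ℝ => Real.exp (c * z - b * z ^ 2)) := by
  have hmeas : AEStronglyMeasurable (fun z : ℝ => Real.exp (c * z - b * z ^ 2)) volume :=
    (Real.continuous_exp.comp (by continuity)).aestronglyMeasurable
  refine Integrable.mono' (g := fun z => Real.exp (c^2/(2*b)) * Real.exp (-(b/2) * z^2))
    ((integrable_exp_neg_mul_sq (half_pos hb)).const_mul _) hmeas
    (Filter.Eventually.of_forall fun z => ?_)
  simp only [Real.norm_eq_abs, Real.abs_exp, ← Real.exp_add]
  refine Real.exp_le_exp.mpr ?_
  have hc : c^2 / (2*b) * (2*b) = c^2 := div_mul_cancel₀ _ (by positivity)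
  nlinarith [sq_nonneg (b * z - c), hb, hc]
lemma w'_nonneg {w w' : ℝ → ℝ} (hw : AssumptionW w w') {p : ℝ} (hp : p ∈ Ioo (0:ℝ) 1) :
    0 ≤ w' p := by
  have hd : HasDerivAt w (w' p) p :=
    (hw.deriv p (Ioo_subset_Icc_self hp)).hasDerivAt (Icc_mem_nhds hp.1 hp.2)
  have ht : Tendsto (slope w p) (𝓝[>] p) (𝓝 (w' p)) :=
    (hasDerivAt_iff_tendsto_slope.mp hd).mono_left
      (nhdsWithin_mono p fun q hq => ne_of_gt hq)
  refine ge_of_tendsto ht ?_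
  filter_upwards [Ioo_mem_nhdsGT hp.2] with q hq
  have hq1 : q ∈ Icc (0:ℝ) 1 := ⟨(hp.1.trans hq.1).le, hq.2.le⟩
  have hlt : w p < w q := hw.mono (Ioo_subset_Icc_self hp) hq1 hq.1
  rw [slope_def_field]
  exact div_nonneg (by linarith) (by linarith [hq.1])

lemma integrand_integrable {w w' : ℝ → ℝ} (hw : AssumptionW w w') (x : ℝ) :
    Integrable (fun z => Real.exp (x * z) * w' (stdGaussianCdf z) * stdGaussianPdf z) := by
  obtain ⟨c, hc, α, hα, hgrowth⟩ := hw.growth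
  have hbpos : (0:ℝ) < (1 + α)/2 := by have := hα.1; linarith
  set D : ℝ := (Real.sqrt (2 * Real.pi))⁻¹ with hD
  have hDpos : 0 < D := by rw [hD]; positivity
  set K : ℝ := 2 * c * D ^ α * D * Real.exp (-α/2) with hK
  have hg : Integrable (fun z : ℝ => K * (Real.exp ((x - α) * z - ((1 + α)/2) * z ^ 2)
      + Real.exp ((x + α) * z - ((1 + α)/2) * z ^ 2))) :=
    ((integrable_exp_lin_sub_sq _ hbpos).add (integrable_exp_lin_sub_sq _ hbpos)).const_mul K
  refine hg.mono' ?_ (Filter.Eventually.of_forall fun z => ?_)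
  · refine Continuous.aestronglyMeasurable ?_
    refine ((Real.continuous_exp.comp (continuous_const.mul continuous_id)).mul
      (hw.contDeriv.comp_continuous cdf_cont fun z => Ioo_subset_Icc_self (cdf_mem_Ioo z))).mul
      pdf_cont
  · set p := stdGaussianCdf z with hp
    have hpI : p ∈ Ioo (0:ℝ) 1 := cdf_mem_Ioo z
    have h1 : p ^ α ≤ gaussLB z ^ α :=
      Real.rpow_le_rpow_of_nonpos (gaussLB_pos z) (cdf_lb z) hα.2.le
    have h2 : (1 - p) ^ α ≤ gaussLB z ^ α :=
      Real.rpow_le_rpow_of_nonpos (gaussLB_pos z) (cdf_ub z) hα.2.le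
    have h3 : w' p ≤ 2 * c * gaussLB z ^ α := by nlinarith [hgrowth p hpI, hc.le]
    have hnn : 0 ≤ Real.exp (x * z) * w' p * stdGaussianPdf z :=
      mul_nonneg (mul_nonneg (Real.exp_pos _).le (w'_nonneg hw hpI)) (pdf_pos z).le
    rw [Real.norm_eq_abs, abs_of_nonneg hnn]
    have step1 : Real.exp (x * z) * w' p * stdGaussianPdf z
        ≤ Real.exp (x * z) * (2 * c * gaussLB z ^ α) * stdGaussianPdf z := by
      exact mul_le_mul_of_nonneg_right
        (mul_le_mul_of_nonneg_left h3 (Real.exp_pos _).le) (pdf_pos z).le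
    refine step1.trans ?_
    have hLα : gaussLB z ^ α = D ^ α * Real.exp ((-((|z| + 1) ^ 2) / 2) * α) := by
      unfold gaussLB
      rw [Real.mul_rpow hDpos.le (Real.exp_pos _).le, ← Real.exp_mul]
    have hpdf : stdGaussianPdf z = D * Real.exp (-(z ^ 2) / 2) := rfl
    rw [hLα, hpdf]
    have lhs_eq : Real.exp (x * z) * (2 * c * (D ^ α * Real.exp (-((|z| + 1) ^ 2) / 2 * α)))
        * (D * Real.exp (-(z ^ 2) / 2))
        = (2 * c * D ^ α * D) * Real.exp (x * z + -((|z| + 1) ^ 2) / 2 * α + -(z ^ 2) / 2) := by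
      rw [Real.exp_add, Real.exp_add]; ring
    rw [lhs_eq]
    have rhs_eq : K * (Real.exp ((x - α) * z - ((1 + α)/2) * z ^ 2)
        + Real.exp ((x + α) * z - ((1 + α)/2) * z ^ 2))
        = (2 * c * D ^ α * D) * (Real.exp (-α/2 + ((x - α) * z - ((1 + α)/2) * z ^ 2))
          + Real.exp (-α/2 + ((x + α) * z - ((1 + α)/2) * z ^ 2))) := by
      rw [hK, Real.exp_add, Real.exp_add]; ring
    rw [rhs_eq]
    have hfac : (0:ℝ) ≤ 2 * c * D ^ α * D := by positivity
    refine mul_le_mul_of_nonneg_left ?_ hfac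
    rcases le_or_gt 0 z with hz | hz
    · have habs : |z| = z := abs_of_nonneg hz
      have : x * z + -((|z| + 1) ^ 2) / 2 * α + -(z ^ 2) / 2
          = -α/2 + ((x - α) * z - ((1 + α)/2) * z ^ 2) := by rw [habs]; ring
      rw [this]
      linarith [(Real.exp_pos (-α/2 + ((x + α) * z - ((1 + α)/2) * z ^ 2)))]
    · have habs : |z| = -z := abs_of_neg hz
      have : x * z + -((|z| + 1) ^ 2) / 2 * α + -(z ^ 2) / 2
          = -α/2 + ((x + α) * z - ((1 + α)/2) * z ^ 2) := by rw [habs]; ring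
      rw [this]
      linarith [(Real.exp_pos (-α/2 + ((x - α) * z - ((1 + α)/2) * z ^ 2)))]

/-- `h(0) = 1` and `h(x) < ∞` (i.e. the defining integrand is integrable)
for every `x ∈ ℝ`. -/
theorem stmt0 (w w' : ℝ → ℝ) (hw : AssumptionW w w') :
    hInt w' 0 = 1 ∧
      ∀ x : ℝ,
        Integrable (fun z => Real.exp (x * z) * w' (stdGaussianCdf z) * stdGaussianPdf z) := by

  refine ⟨?_, fun x => integrand_integrable hw x⟩
  have hint : Integrable (fun z => w' (stdGaussianCdf z) * stdGaussianPdf z) := by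
    have := integrand_integrable hw 0
    simpa using this
  have hderiv : ∀ z : ℝ, HasDerivAt (fun t => w (stdGaussianCdf t))
      (w' (stdGaussianCdf z) * stdGaussianPdf z) z := by
    intro z
    have hmem := cdf_mem_Ioo z
    have hdw : HasDerivAt w (w' (stdGaussianCdf z)) (stdGaussianCdf z) :=
      (hw.deriv _ (Ioo_subset_Icc_self hmem)).hasDerivAt (Icc_mem_nhds hmem.1 hmem.2)
    exact hdw.comp z (cdf_hasDerivAt z)
  have hbot : Tendsto (fun t => w (stdGaussianCdf t)) atBot (𝓝 0) := by
    have hΦ : Tendsto stdGaussianCdf atBot (𝓝[Icc (0:ℝ) 1] 0) := by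
      rw [tendsto_nhdsWithin_iff]
      exact ⟨cdf_tendsto_atBot, Filter.Eventually.of_forall fun z =>
        Ioo_subset_Icc_self (cdf_mem_Ioo z)⟩
    have hcw : ContinuousWithinAt w (Icc (0:ℝ) 1) 0 :=
      (hw.deriv 0 ⟨le_rfl, zero_le_one⟩).continuousWithinAt
    have := hcw.tendsto.comp hΦ
    rwa [hw.zero] at this
  have htop : Tendsto (fun t => w (stdGaussianCdf t)) atTop (𝓝 1) := by
    have hΦ : Tendsto stdGaussianCdf atTop (𝓝[Icc (0:ℝ) 1] 1) := by
      rw [tendsto_nhdsWithin_iff]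
      exact ⟨cdf_tendsto_atTop, Filter.Eventually.of_forall fun z =>
        Ioo_subset_Icc_self (cdf_mem_Ioo z)⟩
    have hcw : ContinuousWithinAt w (Icc (0:ℝ) 1) 1 :=
      (hw.deriv 1 ⟨zero_le_one, le_rfl⟩).continuousWithinAt
    have := hcw.tendsto.comp hΦ
    rwa [hw.one] at this
  have := MeasureTheory.integral_of_hasDerivAt_of_tendsto hderiv hint hbot htop
  unfold hInt
  simp only [zero_mul, Real.exp_zero, one_mul]
  rw [this]; ring
end

section
/- Let γ ≥ 1, x > 0, let w satisfy Assumption (W) with dual w̄(p) = 1 − w(1−p), and let Q_ρ:(0,1)→(0,∞) be an increasing function with ∫₀¹ Q_ρ(p) dp < ∞. Suppose either (i) γ > 1 and the limit lim_{p↓0} w'(p)/Q_ρ(p) exists in (0,∞], or (ii) γ = 1 and lim_{p↓0} w'(p)/Q_ρ(p) = ∞. Then the supremum, over all increasing right-continuous functions Q:(0,1)→(0,∞) satisfying the budget constraint ∫₀¹ Q(p) Q_ρ(1−p) dp ≤ x, of the value (1/γ)∫₀¹ Q(p)^γ dw̄(p) (the Lebesgue–Stieltjes integral of Q^γ with respect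 to w̄) equals +∞. -/
open MeasureTheory Set Filter Topology

open scoped ENNReal

lemma stmt5_refl_preimage : (fun q : ℝ => 1 - q) ⁻¹' (Set.Ioo 0 1) = Set.Ioo (0:ℝ) 1 := by
  ext q
  simp only [Set.mem_preimage, Set.mem_Ioo]
  constructor <;> rintro ⟨h1, h2⟩ <;> constructor <;> linarith

lemma stmt5_lintegral_reflect (g : ℝ → ℝ≥0∞) :
    ∫⁻ p in Set.Ioo (0:ℝ) 1, g (1 - p) = ∫⁻ q in Set.Ioo (0:ℝ) 1, g q := by
  have hmp : MeasurePreserving (fun p : ℝ => 1 - p) volume volume :=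
    Measure.measurePreserving_sub_left volume 1
  have hme : MeasurableEmbedding (fun p : ℝ => 1 - p) :=
    (MeasurableEquiv.subLeft (1:ℝ)).measurableEmbedding
  have h := hmp.setLIntegral_comp_preimage_emb hme g (Set.Ioo 0 1)
  rwa [stmt5_refl_preimage] at h

theorem stmt5 (γ x : ℝ) (hγ : 1 ≤ γ) (hx : 0 < x)
    (w w' : ℝ → ℝ) (hw : AssumptionW w w')
    (Qρ : ℝ → ℝ)
    (hQρpos : ∀ p ∈ Set.Ioo (0:ℝ) 1, 0 < Qρ p)
    (hQρmono : MonotoneOn Qρ (Set.Ioo 0 1))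
    (hQρint : IntegrableOn Qρ (Set.Ioo 0 1))
    (hlim :
      (1 < γ ∧ ((∃ L > (0:ℝ), Tendsto (fun p => w' p / Qρ p) (𝓝[>] 0) (𝓝 L)) ∨
          Tendsto (fun p => w' p / Qρ p) (𝓝[>] 0) atTop)) ∨
      (γ = 1 ∧ Tendsto (fun p => w' p / Qρ p) (𝓝[>] 0) atTop)) :
    (⨆ Q : {Q : ℝ → ℝ //
        MonotoneOn Q (Set.Ioo 0 1) ∧
        (∀ p ∈ Set.Ioo (0:ℝ) 1, ContinuousWithinAt Q (Set.Ici p) p) ∧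
        (∀ p ∈ Set.Ioo (0:ℝ) 1, 0 < Q p) ∧
        ∫⁻ p in Set.Ioo (0:ℝ) 1, ENNReal.ofReal (Q p * Qρ (1 - p)) ≤ ENNReal.ofReal x},
      ENNReal.ofReal (1 / γ) *
        ∫⁻ p in Set.Ioo (0:ℝ) 1, ENNReal.ofReal (Q.1 p ^ γ * w' (1 - p))) = ⊤ := by
  classical
  have hγ0 : (0:ℝ) < γ := lt_of_lt_of_le one_pos hγ
  set m : ℝ → ℝ := fun t => ∫ q in Set.Ioo (0:ℝ) t, Qρ q with hm
  have hmdef : ∀ t, (∫ q in Set.Ioo (0:ℝ) t, Qρ q) = m t := fun t => rfl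
  -- positivity of m on (0,1)
  have hmpos : ∀ t ∈ Set.Ioo (0:ℝ) 1, 0 < m t := by
    intro t ht
    have hsub : Set.Ioo (0:ℝ) t ⊆ Set.Ioo (0:ℝ) 1 := Set.Ioo_subset_Ioo le_rfl ht.2.le
    have hint : IntegrableOn Qρ (Set.Ioo (0:ℝ) t) := hQρint.mono_set hsub
    have hsub2 : Set.Ioo (t/2) t ⊆ Set.Ioo (0:ℝ) t :=
      Set.Ioo_subset_Ioo (by linarith [ht.1]) le_rfl
    have hstep1 : ∫ q in Set.Ioo (t/2) t, Qρ q ≤ m t := by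
      rw [← hmdef]
      apply setIntegral_mono_set hint
      · refine (ae_restrict_iff' measurableSet_Ioo).mpr (ae_of_all _ fun q hq => ?_)
        exact (hQρpos q (hsub hq)).le
      · exact hsub2.eventuallyLE
    have hstep0 : Qρ (t/2) * (t/2) ≤ ∫ q in Set.Ioo (t/2) t, Qρ q := by
      have hc : ∫ _ in Set.Ioo (t/2) t, Qρ (t/2) = Qρ (t/2) * (t/2) := by
        rw [setIntegral_const, Real.volume_real_Ioo, smul_eq_mul, mul_comm]
        congr 1
        rw [max_eq_left (by linarith [ht.1])]
        ring
      rw [← hc]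
      apply setIntegral_mono_on
      · exact integrableOn_const measure_Ioo_lt_top.ne
      · exact hint.mono_set hsub2
      · exact measurableSet_Ioo
      · intro q hq
        exact hQρmono ⟨by linarith [ht.1], by linarith [ht.2, hq.1]⟩ (hsub (hsub2 hq)) hq.1.le
    have h2 : 0 < Qρ (t/2) := hQρpos _ ⟨by linarith [ht.1], by linarith [ht.2, ht.1]⟩
    nlinarith [ht.1]
  -- upper bound for m near 0
  have hmle : ∀ t, 0 < t → t ≤ 1/2 → m t ≤ Qρ (1/2) * t := by
    intro t ht0 ht2
    have hsub : Set.Ioo (0:ℝ) t ⊆ Set.Ioo (0:ℝ) 1 := Set.Ioo_subset_Ioo le_rfl (by linarith)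
    have hc : ∫ _ in Set.Ioo (0:ℝ) t, Qρ (1/2) = Qρ (1/2) * t := by
      rw [setIntegral_const, Real.volume_real_Ioo, smul_eq_mul, mul_comm]
      congr 1
      rw [max_eq_left (by linarith : (0:ℝ) ≤ t - 0)]
      ring
    rw [← hmdef, ← hc]
    apply setIntegral_mono_on
    · exact hQρint.mono_set hsub
    · exact integrableOn_const measure_Ioo_lt_top.ne
    · exact measurableSet_Ioo
    · intro q hq
      exact hQρmono (hsub hq) (by norm_num) (by linarith [hq.2])
  set T : ℝ := ∫ q in Set.Ioo (0:ℝ) 1, Qρ q with hT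
  have hT0 : 0 ≤ T := setIntegral_nonneg measurableSet_Ioo fun q hq => (hQρpos q hq).le
  set K : ℝ := 1/γ * (x/2) ^ γ with hK
  have hKpos : 0 < K := by
    apply mul_pos (by positivity)
    exact Real.rpow_pos_of_pos (by linarith) γ
  -- extract ρ, p₀
  have key : ∀ M : ℝ, ∃ ρ > (0:ℝ), ∃ p₀, 0 < p₀ ∧ p₀ < 1 ∧
      (∀ q ∈ Set.Ioc (0:ℝ) p₀, ρ * Qρ q ≤ w' q) ∧
      M ≤ 1/γ * ((x/(2 * m p₀)) ^ γ * (ρ * m p₀)) := by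
    intro M
    have hVeq : ∀ ρ t, 0 < m t → 1/γ * ((x/(2 * m t)) ^ γ * (ρ * m t))
        = K * ρ * (m t) ^ (1 - γ) := by
      intro ρ t hmt
      have h1 : x / (2 * m t) = (x/2) / (m t) := by ring
      rw [h1, Real.div_rpow (by linarith) hmt.le, Real.rpow_sub hmt, Real.rpow_one, hK]
      have h2 : (m t) ^ γ ≠ 0 := (Real.rpow_pos_of_pos hmt γ).ne'
      field_simp
    have main : ∀ ρ > (0:ℝ), (∀ᶠ p in 𝓝[>] (0:ℝ), ρ ≤ w' p / Qρ p) →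
        ∀ η > (0:ℝ), ∃ p₀, 0 < p₀ ∧ p₀ < 1 ∧ m p₀ ≤ η ∧
          (∀ q ∈ Set.Ioc (0:ℝ) p₀, ρ * Qρ q ≤ w' q) := by
      intro ρ hρ hev η hη
      rcases (mem_nhdsGT_iff_exists_Ioo_subset' (zero_lt_one' ℝ)).mp hev with ⟨u, hu, hsubu⟩
      have hu0 : (0:ℝ) < u := hu
      have hC : 0 < Qρ (1/2) := hQρpos _ (by norm_num)
      set p₀ : ℝ := min (u/2) (min (1/2) (η / Qρ (1/2))) with hp₀
      have hp₀0 : 0 < p₀ := by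
        apply lt_min (by linarith)
        exact lt_min (by norm_num) (by positivity)
      have hp₀half : p₀ ≤ 1/2 := le_trans (min_le_right _ _) (min_le_left _ _)
      have hp₀1 : p₀ < 1 := by linarith
      refine ⟨p₀, hp₀0, hp₀1, ?_, ?_⟩
      · calc m p₀ ≤ Qρ (1/2) * p₀ := hmle p₀ hp₀0 hp₀half
          _ ≤ Qρ (1/2) * (η / Qρ (1/2)) := by
              refine mul_le_mul_of_nonneg_left ?_ hC.le
              exact le_trans (min_le_right _ _) (min_le_right _ _)
          _ = η := by field_simp
      · intro q hq
        have hqle : q ≤ u/2 := le_trans hq.2 (min_le_left _ _)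
        have hqu : q ∈ Set.Ioo (0:ℝ) u := ⟨hq.1, by linarith⟩
        have hratio : ρ ≤ w' q / Qρ q := hsubu hqu
        have hQq : 0 < Qρ q := hQρpos q ⟨hq.1, lt_of_le_of_lt hq.2 hp₀1⟩
        calc ρ * Qρ q ≤ (w' q / Qρ q) * Qρ q := mul_le_mul_of_nonneg_right hratio hQq.le
          _ = w' q := by field_simp
    rcases hlim with ⟨hγ1, hcase⟩ | ⟨hγeq, htend⟩
    · -- γ > 1
      obtain ⟨ρ, hρ, hev⟩ : ∃ ρ > (0:ℝ), ∀ᶠ p in 𝓝[>] (0:ℝ), ρ ≤ w' p / Qρ p := by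
        rcases hcase with ⟨L, hL, htd⟩ | htd
        · exact ⟨L/2, by linarith, htd.eventually (eventually_ge_nhds (by linarith))⟩
        · exact ⟨1, one_pos, htd.eventually_ge_atTop 1⟩
      set B : ℝ := (|M| + 1) / (K * ρ) with hB
      have hBpos : 0 < B := by positivity
      set η : ℝ := B ^ (1 / (1 - γ)) with hη
      have hηpos : 0 < η := Real.rpow_pos_of_pos hBpos _
      obtain ⟨p₀, hp₀0, hp₀1, hmη, hrat⟩ := main ρ hρ hev η hηpos
      refine ⟨ρ, hρ, p₀, hp₀0, hp₀1, hrat, ?_⟩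
      have hmp := hmpos p₀ ⟨hp₀0, hp₀1⟩
      rw [hVeq ρ p₀ hmp]
      have hexp : (1:ℝ) - γ ≤ 0 := by linarith
      have hmono : η ^ (1 - γ) ≤ (m p₀) ^ (1 - γ) :=
        Real.rpow_le_rpow_of_nonpos hmp hmη hexp
      have h1γ : (1:ℝ) - γ ≠ 0 := ne_of_lt (by linarith)
      have hηval : η ^ (1 - γ) = B := by
        rw [hη, ← Real.rpow_mul hBpos.le, one_div_mul_cancel h1γ, Real.rpow_one]
      have hKB : K * ρ * B = |M| + 1 := by
        rw [hB]; field_simp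
      calc M ≤ |M| + 1 := by linarith [le_abs_self M]
        _ = K * ρ * B := hKB.symm
        _ ≤ K * ρ * (m p₀) ^ (1 - γ) := by
            rw [← hηval]
            exact mul_le_mul_of_nonneg_left hmono (by positivity)
    · -- γ = 1
      set ρ : ℝ := max 1 (M / K) with hρdef
      have hρ : 0 < ρ := lt_of_lt_of_le one_pos (le_max_left _ _)
      have hev : ∀ᶠ p in 𝓝[>] (0:ℝ), ρ ≤ w' p / Qρ p := htend.eventually_ge_atTop ρ
      obtain ⟨p₀, hp₀0, hp₀1, _, hrat⟩ := main ρ hρ hev 1 one_pos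
      refine ⟨ρ, hρ, p₀, hp₀0, hp₀1, hrat, ?_⟩
      have hmp := hmpos p₀ ⟨hp₀0, hp₀1⟩
      rw [hVeq ρ p₀ hmp, hγeq]
      simp only [sub_self, Real.rpow_zero, mul_one]
      calc M = K * (M / K) := by field_simp
        _ ≤ K * ρ := mul_le_mul_of_nonneg_left (le_max_right _ _) hKpos.le
  -- now prove the supremum is ⊤
  rw [iSup_eq_top]
  intro b hb
  set M : ℝ := b.toReal + 1 with hM
  obtain ⟨ρ, hρ, p₀, hp₀0, hp₀1, hrat, hMle⟩ := key M
  have hmp : 0 < m p₀ := hmpos p₀ ⟨hp₀0, hp₀1⟩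
  set a : ℝ := x / (2 * m p₀) with ha
  have ha0 : 0 < a := by positivity
  set ε : ℝ := min a (x / (2 * (T + 1))) with hε
  have hε0 : 0 < ε := lt_min ha0 (by positivity)
  have hεa : ε ≤ a := min_le_left _ _
  set Q : ℝ → ℝ := fun p => if p < 1 - p₀ then ε else a with hQdef
  have hQval_hi : ∀ q : ℝ, q ≤ p₀ → Q (1 - q) = a := by
    intro q hq
    simp only [hQdef]
    rw [if_neg (not_lt.mpr (by linarith : (1:ℝ) - p₀ ≤ 1 - q))]
  have hQval_lo : ∀ q : ℝ, p₀ < q → Q (1 - q) = ε := by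
    intro q hq
    simp only [hQdef]
    rw [if_pos (by linarith : (1:ℝ) - q < 1 - p₀)]
  have hQmono : Monotone Q := by
    intro p q hpq
    by_cases hq2 : q < 1 - p₀
    · simp only [hQdef]
      rw [if_pos (lt_of_le_of_lt hpq hq2), if_pos hq2]
    · by_cases hp2 : p < 1 - p₀
      · simp only [hQdef]; rw [if_pos hp2, if_neg hq2]; exact hεa
      · simp only [hQdef]; rw [if_neg hp2, if_neg hq2]
  have hQpos : ∀ p : ℝ, 0 < Q p := by
    intro p
    simp only [hQdef]
    split
    · exact hε0
    · exact ha0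
  have hQrc : ∀ p ∈ Set.Ioo (0:ℝ) 1, ContinuousWithinAt Q (Set.Ici p) p := by
    intro p _
    by_cases hplt : p < 1 - p₀
    · apply ContinuousAt.continuousWithinAt
      apply Filter.EventuallyEq.continuousAt (y := ε)
      filter_upwards [Iio_mem_nhds hplt] with q hq
      simp only [hQdef]
      rw [if_pos (show q < 1 - p₀ from hq)]
    · apply (continuousWithinAt_const (b := a)).congr
      · intro q hq
        simp only [hQdef]
        rw [if_neg (not_lt.mpr (le_trans (not_lt.mp hplt) hq))]
      · simp only [hQdef]
        rw [if_neg hplt]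
  -- basic sets facts
  have hIocsub : Set.Ioc (0:ℝ) p₀ ⊆ Set.Ioo (0:ℝ) 1 :=
    fun q hq => ⟨hq.1, lt_of_le_of_lt hq.2 hp₀1⟩
  have hQρIoc : IntegrableOn Qρ (Set.Ioc (0:ℝ) p₀) := hQρint.mono_set hIocsub
  have hQρIoo2 : IntegrableOn Qρ (Set.Ioo p₀ 1) :=
    hQρint.mono_set (Set.Ioo_subset_Ioo hp₀0.le le_rfl)
  have hsplitset : Set.Ioc (0:ℝ) p₀ ∪ Set.Ioo p₀ 1 = Set.Ioo (0:ℝ) 1 :=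
    Set.Ioc_union_Ioo_eq_Ioo hp₀0.le hp₀1
  have hdisj : Disjoint (Set.Ioc (0:ℝ) p₀) (Set.Ioo p₀ 1) := by
    rw [Set.disjoint_left]
    rintro q ⟨_, h1⟩ ⟨h2, _⟩
    exact absurd h2 (not_lt.mpr h1)
  -- budget constraint
  have hbudget : ∫⁻ p in Set.Ioo (0:ℝ) 1, ENNReal.ofReal (Q p * Qρ (1 - p))
      ≤ ENNReal.ofReal x := by
    have hre := stmt5_lintegral_reflect (fun q => ENNReal.ofReal (Q (1 - q) * Qρ q))
    have hlhs : ∫⁻ p in Set.Ioo (0:ℝ) 1, ENNReal.ofReal (Q p * Qρ (1 - p))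
        = ∫⁻ q in Set.Ioo (0:ℝ) 1, ENNReal.ofReal (Q (1 - q) * Qρ q) := by
      rw [← hre]
      refine setLIntegral_congr_fun measurableSet_Ioo (fun p _ => ?_)
      rw [sub_sub_cancel]
    rw [hlhs, ← hsplitset, lintegral_union measurableSet_Ioo hdisj]
    have h1 : ∫⁻ q in Set.Ioc (0:ℝ) p₀, ENNReal.ofReal (Q (1 - q) * Qρ q)
        = ENNReal.ofReal (x/2) := by
      have heq : ∫⁻ q in Set.Ioc (0:ℝ) p₀, ENNReal.ofReal (Q (1 - q) * Qρ q)
          = ∫⁻ q in Set.Ioc (0:ℝ) p₀, ENNReal.ofReal (a * Qρ q) := by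
        refine setLIntegral_congr_fun measurableSet_Ioc (fun q hq => ?_)
        rw [hQval_hi q hq.2]
      rw [heq, ← ofReal_integral_eq_lintegral_ofReal (hQρIoc.const_mul a)
        ((ae_restrict_iff' measurableSet_Ioc).mpr (ae_of_all _ fun q hq =>
          mul_nonneg ha0.le (hQρpos q (hIocsub hq)).le))]
      congr 1
      rw [integral_const_mul, integral_Ioc_eq_integral_Ioo, hmdef, ha]
      field_simp
    have h2 : ∫⁻ q in Set.Ioo p₀ 1, ENNReal.ofReal (Q (1 - q) * Qρ q)
        ≤ ENNReal.ofReal (x/2) := by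
      have heq : ∫⁻ q in Set.Ioo p₀ 1, ENNReal.ofReal (Q (1 - q) * Qρ q)
          = ∫⁻ q in Set.Ioo p₀ 1, ENNReal.ofReal (ε * Qρ q) := by
        refine setLIntegral_congr_fun measurableSet_Ioo (fun q hq => ?_)
        rw [hQval_lo q hq.1]
      rw [heq, ← ofReal_integral_eq_lintegral_ofReal (hQρIoo2.const_mul ε)
        ((ae_restrict_iff' measurableSet_Ioo).mpr (ae_of_all _ fun q hq =>
          mul_nonneg hε0.le (hQρpos q (Set.Ioo_subset_Ioo hp₀0.le le_rfl hq)).le))]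
      apply ENNReal.ofReal_le_ofReal
      rw [integral_const_mul]
      have hIle : ∫ q in Set.Ioo p₀ 1, Qρ q ≤ T := by
        rw [hT]
        apply setIntegral_mono_set hQρint
        · refine (ae_restrict_iff' measurableSet_Ioo).mpr (ae_of_all _ fun q hq => ?_)
          exact (hQρpos q hq).le
        · exact (Set.Ioo_subset_Ioo hp₀0.le le_rfl).eventuallyLE
      have hεle : ε ≤ x / (2 * (T + 1)) := min_le_right _ _
      calc ε * ∫ q in Set.Ioo p₀ 1, Qρ q ≤ ε * T := mul_le_mul_of_nonneg_left hIle hε0.le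
        _ ≤ (x / (2 * (T + 1))) * T := mul_le_mul_of_nonneg_right hεle hT0
        _ ≤ x / 2 := by
            rw [div_mul_eq_mul_div, div_le_div_iff₀ (by positivity) (by norm_num)]
            nlinarith
    refine le_trans (add_le_add h1.le h2) (le_of_eq ?_)
    rw [← ENNReal.ofReal_add (by positivity) (by positivity)]
    congr 1
    ring
  -- value lower bound
  have hw'int : IntegrableOn w' (Set.Ioc (0:ℝ) p₀) := by
    have : IntegrableOn w' (Set.Icc (0:ℝ) 1) := hw.contDeriv.integrableOn_Icc
    exact this.mono_set fun q hq => ⟨hq.1.le, le_trans hq.2 hp₀1.le⟩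
  have hvallow : ENNReal.ofReal (1/γ * ((x/(2 * m p₀)) ^ γ * (ρ * m p₀)))
      ≤ ENNReal.ofReal (1 / γ) *
        ∫⁻ p in Set.Ioo (0:ℝ) 1, ENNReal.ofReal (Q p ^ γ * w' (1 - p)) := by
    have hre := stmt5_lintegral_reflect (fun q => ENNReal.ofReal (Q (1 - q) ^ γ * w' q))
    have hlhs : ∫⁻ p in Set.Ioo (0:ℝ) 1, ENNReal.ofReal (Q p ^ γ * w' (1 - p))
        = ∫⁻ q in Set.Ioo (0:ℝ) 1, ENNReal.ofReal (Q (1 - q) ^ γ * w' q) := by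
      rw [← hre]
      refine setLIntegral_congr_fun measurableSet_Ioo (fun p _ => ?_)
      rw [sub_sub_cancel]
    rw [hlhs]
    have hmono1 : ∫⁻ q in Set.Ioc (0:ℝ) p₀, ENNReal.ofReal (Q (1 - q) ^ γ * w' q)
        ≤ ∫⁻ q in Set.Ioo (0:ℝ) 1, ENNReal.ofReal (Q (1 - q) ^ γ * w' q) :=
      lintegral_mono_set hIocsub
    have heq : ∫⁻ q in Set.Ioc (0:ℝ) p₀, ENNReal.ofReal (Q (1 - q) ^ γ * w' q)
        = ∫⁻ q in Set.Ioc (0:ℝ) p₀, ENNReal.ofReal (a ^ γ * w' q) := by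
      refine setLIntegral_congr_fun measurableSet_Ioc (fun q hq => ?_)
      rw [hQval_hi q hq.2]
    have hw'nonneg : ∀ q ∈ Set.Ioc (0:ℝ) p₀, 0 ≤ w' q := fun q hq =>
      le_trans (mul_nonneg hρ.le (hQρpos q (hIocsub hq)).le) (hrat q hq)
    have hlin : ∫⁻ q in Set.Ioc (0:ℝ) p₀, ENNReal.ofReal (a ^ γ * w' q)
        = ENNReal.ofReal (∫ q in Set.Ioc (0:ℝ) p₀, a ^ γ * w' q) := by
      rw [← ofReal_integral_eq_lintegral_ofReal (hw'int.const_mul _)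
        ((ae_restrict_iff' measurableSet_Ioc).mpr (ae_of_all _ fun q hq =>
          mul_nonneg (Real.rpow_nonneg ha0.le γ) (hw'nonneg q hq)))]
    have hIq : ρ * m p₀ ≤ ∫ q in Set.Ioc (0:ℝ) p₀, w' q := by
      rw [integral_Ioc_eq_integral_Ioo]
      have hcmp : ∫ q in Set.Ioo (0:ℝ) p₀, ρ * Qρ q ≤ ∫ q in Set.Ioo (0:ℝ) p₀, w' q := by
        apply setIntegral_mono_on
        · exact (hQρint.mono_set (Set.Ioo_subset_Ioo le_rfl hp₀1.le)).const_mul ρ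
        · exact hw'int.mono_set Set.Ioo_subset_Ioc_self
        · exact measurableSet_Ioo
        · intro q hq
          exact hrat q (Set.Ioo_subset_Ioc_self hq)
      rw [integral_const_mul, hmdef] at hcmp
      exact hcmp
    have hstep : ENNReal.ofReal ((x/(2 * m p₀)) ^ γ * (ρ * m p₀))
        ≤ ∫⁻ q in Set.Ioo (0:ℝ) 1, ENNReal.ofReal (Q (1 - q) ^ γ * w' q) := by
      refine le_trans ?_ (le_trans (le_of_eq heq.symm) hmono1)
      rw [hlin]
      apply ENNReal.ofReal_le_ofReal
      rw [integral_const_mul]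
      rw [← ha]
      exact mul_le_mul_of_nonneg_left hIq (Real.rpow_nonneg ha0.le γ)
    calc ENNReal.ofReal (1/γ * ((x/(2 * m p₀)) ^ γ * (ρ * m p₀)))
        = ENNReal.ofReal (1/γ) * ENNReal.ofReal ((x/(2 * m p₀)) ^ γ * (ρ * m p₀)) :=
          ENNReal.ofReal_mul (by positivity)
      _ ≤ ENNReal.ofReal (1/γ) *
            ∫⁻ q in Set.Ioo (0:ℝ) 1, ENNReal.ofReal (Q (1 - q) ^ γ * w' q) :=
          mul_le_mul_of_nonneg_left hstep zero_le
  refine ⟨⟨Q, hQmono.monotoneOn _, hQrc, fun p _ => hQpos p, hbudget⟩, ?_⟩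
  have hbM : b < ENNReal.ofReal M := by
    rw [ENNReal.lt_ofReal_iff_toReal_lt hb.ne]
    rw [hM]
    linarith
  exact lt_of_lt_of_le hbM (le_trans (ENNReal.ofReal_le_ofReal hMle) hvallow)
end

section
/- Let w satisfy Assumption (W), let h(x) = ∫_ℝ e^{xz} w'(Φ(z)) φ(z) dz, let T > 0, γ ∈ ℝ and θ ∈ ℝ. Suppose there exists a continuous function Y:[0,T]→ℝ with Y(T) = 0, Y(t) > 0 for all t∈[0,T), differentiable on [0,T) with Y'(t) = −θ² [1 + h'(−γ√(Y(t)))/(h(−γ√(Y(t)))·√(Y(t)))]^{−2} for all t∈[0,T). Then θ ≠ 0 and h'(0) = 0. -/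
open MeasureTheory Set Filter Topology

set_option maxHeartbeats 1000000

namespace Stmt6Aux

open scoped ENNReal

lemma pdf_pos (z : ℝ) : 0 < stdGaussianPdf z := by
  unfold stdGaussianPdf
  positivity

lemma pdf_cont : Continuous stdGaussianPdf := by
  unfold stdGaussianPdf
  continuity

lemma pdf_integrable : Integrable stdGaussianPdf := by
  unfold stdGaussianPdf
  refine Integrable.const_mul ?_ _
  have : ∀ z : ℝ, Real.exp (-(z^2)/2) = Real.exp (-(1/2 : ℝ) * z ^ 2) := by
    intro z; ring_nf
  simp_rw [this]
  exact integrable_exp_neg_mul_sq (by norm_num)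

lemma integral_pdf : ∫ z, stdGaussianPdf z = 1 := by
  unfold stdGaussianPdf
  rw [integral_const_mul]
  have : ∀ z : ℝ, Real.exp (-(z^2)/2) = Real.exp (-(1/2 : ℝ) * z ^ 2) := by
    intro z; ring_nf
  simp_rw [this, integral_gaussian]
  rw [inv_mul_eq_one₀]
  · rw [show Real.pi / (1/2) = 2 * Real.pi by ring]
  · positivity

lemma pdf_le_one (z : ℝ) : stdGaussianPdf z ≤ 1 := by
  unfold stdGaussianPdf
  have h1 : Real.exp (-(z^2)/2) ≤ 1 := by
    rw [Real.exp_le_one_iff]; nlinarith [sq_nonneg z]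
  have h2 : (Real.sqrt (2 * Real.pi))⁻¹ ≤ 1 := by
    rw [inv_le_one_iff₀]
    right
    rw [show (1:ℝ) = Real.sqrt 1 by simp]
    apply Real.sqrt_le_sqrt
    nlinarith [Real.pi_gt_three]
  calc (Real.sqrt (2 * Real.pi))⁻¹ * Real.exp (-(z^2)/2) ≤ 1 * 1 := by
        apply mul_le_mul h2 h1 (by positivity) (by norm_num)
    _ = 1 := by norm_num

lemma pdf_mono_abs {u v : ℝ} (h : |u| ≤ |v|) : stdGaussianPdf v ≤ stdGaussianPdf u := by
  unfold stdGaussianPdf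
  have : Real.exp (-(v^2)/2) ≤ Real.exp (-(u^2)/2) := by
    apply Real.exp_le_exp.2
    nlinarith [sq_abs u, sq_abs v, abs_nonneg u, mul_self_le_mul_self (abs_nonneg u) h]
  have hK : (0:ℝ) ≤ (Real.sqrt (2 * Real.pi))⁻¹ := by positivity
  exact mul_le_mul_of_nonneg_left this hK

lemma cdf_sub (y x : ℝ) : stdGaussianCdf x - stdGaussianCdf y = ∫ z in y..x, stdGaussianPdf z := by
  exact intervalIntegral.integral_Iic_sub_Iic pdf_integrable.integrableOn pdf_integrable.integrableOn

lemma cdf_cont : Continuous stdGaussianCdf := by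
  have : LipschitzWith 1 stdGaussianCdf := by
    apply LipschitzWith.of_dist_le_mul
    intro x y
    rw [Real.dist_eq, Real.dist_eq]
    have := intervalIntegral.norm_integral_le_of_norm_le_const
      (f := stdGaussianPdf) (a := y) (b := x) (C := 1)
      (fun u _ => by rw [Real.norm_eq_abs, abs_of_pos (pdf_pos u)]; exact pdf_le_one u)
    rw [Real.norm_eq_abs] at this
    have h2 : |stdGaussianCdf x - stdGaussianCdf y| ≤ 1 * |x - y| := by
      rw [cdf_sub]; exact this
    simpa using h2
  exact this.continuous

lemma cdf_lb (z : ℝ) : stdGaussianPdf (|z| + 1) ≤ stdGaussianCdf z := by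
  have h1 : stdGaussianPdf (|z|+1) ≤ ∫ u in Set.Ioc (z-1) z, stdGaussianPdf u := by
    have := setIntegral_ge_of_const_le (μ := volume) (c := stdGaussianPdf (|z|+1))
      (s := Set.Ioc (z-1) z) (f := stdGaussianPdf) measurableSet_Ioc
      (by simp) ?_ pdf_integrable.integrableOn
    · calc stdGaussianPdf (|z|+1) = volume.real (Set.Ioc (z-1) z) • stdGaussianPdf (|z|+1) := by
            simp [Real.volume_real_Ioc]
      _ ≤ _ := this
    · intro u hu
      apply pdf_mono_abs
      rw [abs_of_nonneg (by positivity : (0:ℝ) ≤ |z| + 1)]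
      rcases abs_le.1 (le_refl |z|) with ⟨hz1, hz2⟩
      rw [abs_le]
      constructor <;> nlinarith [hu.1, hu.2, abs_nonneg z, neg_abs_le z, le_abs_self z]
  have h2 : (∫ u in Set.Ioc (z-1) z, stdGaussianPdf u) ≤ stdGaussianCdf z := by
    apply setIntegral_mono_set pdf_integrable.integrableOn
      (Eventually.of_forall fun u => (pdf_pos u).le)
    apply HasSubset.Subset.eventuallyLE
    intro u hu; exact hu.2
  linarith

lemma cdf_ub (z : ℝ) : stdGaussianCdf z ≤ 1 - stdGaussianPdf (|z| + 1) := by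
  have key : stdGaussianCdf z + ∫ u in Set.Ioi z, stdGaussianPdf u = 1 := by
    rw [← integral_pdf]
    exact intervalIntegral.integral_Iic_add_Ioi pdf_integrable.integrableOn pdf_integrable.integrableOn
  have h1 : stdGaussianPdf (|z|+1) ≤ ∫ u in Set.Ioc z (z+1), stdGaussianPdf u := by
    have := setIntegral_ge_of_const_le (μ := volume) (c := stdGaussianPdf (|z|+1))
      (s := Set.Ioc z (z+1)) (f := stdGaussianPdf) measurableSet_Ioc
      (by simp) ?_ pdf_integrable.integrableOn
    · calc stdGaussianPdf (|z|+1) = volume.real (Set.Ioc z (z+1)) • stdGaussianPdf (|z|+1) := by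
            simp [Real.volume_real_Ioc]
      _ ≤ _ := this
    · intro u hu
      apply pdf_mono_abs
      rw [abs_of_nonneg (by positivity : (0:ℝ) ≤ |z| + 1), abs_le]
      constructor <;> nlinarith [hu.1, hu.2, abs_nonneg z, neg_abs_le z, le_abs_self z]
  have h2 : (∫ u in Set.Ioc z (z+1), stdGaussianPdf u) ≤ ∫ u in Set.Ioi z, stdGaussianPdf u := by
    apply setIntegral_mono_set pdf_integrable.integrableOn
      (Eventually.of_forall fun u => (pdf_pos u).le)
    apply HasSubset.Subset.eventuallyLE
    intro u hu; exact hu.1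
  linarith

lemma cdf_pos (z : ℝ) : 0 < stdGaussianCdf z := lt_of_lt_of_le (pdf_pos _) (cdf_lb z)

lemma cdf_lt_one (z : ℝ) : stdGaussianCdf z < 1 := by
  have := cdf_ub z; have := pdf_pos (|z|+1); linarith

lemma cdf_mem_Icc (z : ℝ) : stdGaussianCdf z ∈ Set.Icc (0:ℝ) 1 :=
  ⟨(cdf_pos z).le, (cdf_lt_one z).le⟩

lemma cdf_eq_indicator (x : ℝ) :
    stdGaussianCdf x = ∫ z, (Set.Iic x).indicator stdGaussianPdf z := by
  rw [integral_indicator measurableSet_Iic]; rfl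

lemma cdf_tendsto_atBot : Tendsto stdGaussianCdf atBot (𝓝 0) := by
  have h0 : (0:ℝ) = ∫ _z : ℝ, (0:ℝ) := by simp
  have key : Tendsto (fun x => ∫ z, (Set.Iic x).indicator stdGaussianPdf z) atBot (𝓝 (∫ _z : ℝ, (0:ℝ))) := by
    apply tendsto_integral_filter_of_dominated_convergence (bound := stdGaussianPdf)
    · exact Eventually.of_forall fun x =>
        (pdf_cont.aestronglyMeasurable.indicator measurableSet_Iic)
    · refine Eventually.of_forall fun x => Eventually.of_forall fun z => ?_
      rw [Real.norm_eq_abs, abs_of_nonneg (Set.indicator_nonneg (fun u _ => (pdf_pos u).le) z)]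
      exact Set.indicator_le_self' (fun u _ => (pdf_pos u).le) z
    · exact pdf_integrable
    · refine Eventually.of_forall fun z => ?_
      apply Tendsto.congr' _ tendsto_const_nhds
      filter_upwards [eventually_lt_atBot z] with x hx
      rw [Set.indicator_of_notMem (by simpa using hx.not_ge)]
  rw [h0]
  exact key.congr fun x => (cdf_eq_indicator x).symm

lemma cdf_tendsto_atTop : Tendsto stdGaussianCdf atTop (𝓝 1) := by
  have key : Tendsto (fun x => ∫ z, (Set.Iic x).indicator stdGaussianPdf z) atTop (𝓝 (∫ z, stdGaussianPdf z)) := by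
    apply tendsto_integral_filter_of_dominated_convergence (bound := stdGaussianPdf)
    · exact Eventually.of_forall fun x =>
        (pdf_cont.aestronglyMeasurable.indicator measurableSet_Iic)
    · refine Eventually.of_forall fun x => Eventually.of_forall fun z => ?_
      rw [Real.norm_eq_abs, abs_of_nonneg (Set.indicator_nonneg (fun u _ => (pdf_pos u).le) z)]
      exact Set.indicator_le_self' (fun u _ => (pdf_pos u).le) z
    · exact pdf_integrable
    · refine Eventually.of_forall fun z => ?_
      apply Tendsto.congr' _ tendsto_const_nhds
      filter_upwards [eventually_ge_atTop z] with x hx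
      rw [Set.indicator_of_mem (by simpa using hx)]
  rw [← integral_pdf]
  exact key.congr fun x => (cdf_eq_indicator x).symm

lemma cdf_surj {p : ℝ} (hp : p ∈ Set.Ioo (0:ℝ) 1) : ∃ z, stdGaussianCdf z = p := by
  obtain ⟨a, ha⟩ := (cdf_tendsto_atBot.eventually_lt_const hp.1).exists
  obtain ⟨b, hb⟩ := (cdf_tendsto_atTop.eventually_const_lt hp.2).exists
  have := intermediate_value_uIcc (a := a) (b := b) (f := stdGaussianCdf)
    cdf_cont.continuousOn
  have hmem : p ∈ Set.uIcc (stdGaussianCdf a) (stdGaussianCdf b) := by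
    rw [Set.mem_uIcc]; left; exact ⟨ha.le, hb.le⟩
  obtain ⟨z, _, hz⟩ := this hmem
  exact ⟨z, hz⟩

variable {w w' : ℝ → ℝ}

lemma w'_nonneg (hw : AssumptionW w w') : ∀ p ∈ Set.Icc (0:ℝ) 1, 0 ≤ w' p := by
  intro p hp
  have h := (hasDerivWithinAt_iff_tendsto_slope).1 (hw.deriv p hp)
  have hne : (𝓝[Set.Icc (0:ℝ) 1 \ {p}] p).NeBot := by
    rcases lt_or_ge p 1 with h1 | h1
    · have hsub : Set.Ioo p 1 ⊆ Set.Icc (0:ℝ) 1 \ {p} := fun q hq =>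
        ⟨⟨le_trans hp.1 hq.1.le, hq.2.le⟩, ne_of_gt hq.1⟩
      have : (𝓝[Set.Ioo p 1] p).NeBot := by
        rw [← mem_closure_iff_nhdsWithin_neBot, closure_Ioo (ne_of_lt h1)]
        exact ⟨le_refl p, h1.le⟩
      exact this.mono (nhdsWithin_mono p hsub)
    · have h0 : (0:ℝ) < p := lt_of_lt_of_le one_pos h1
      have hsub : Set.Ioo (0:ℝ) p ⊆ Set.Icc (0:ℝ) 1 \ {p} := fun q hq =>
        ⟨⟨hq.1.le, le_trans hq.2.le hp.2⟩, ne_of_lt hq.2⟩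
      have : (𝓝[Set.Ioo (0:ℝ) p] p).NeBot := by
        rw [← mem_closure_iff_nhdsWithin_neBot, closure_Ioo (ne_of_lt h0)]
        exact ⟨h0.le, le_refl p⟩
      exact this.mono (nhdsWithin_mono p hsub)
  apply ge_of_tendsto h
  filter_upwards [self_mem_nhdsWithin] with q hq
  rcases hq with ⟨hq1, hq2⟩
  have hne' : q ≠ p := by simpa using hq2
  rw [slope_def_field]
  rcases lt_or_gt_of_ne hne' with hlt | hgt
  · have := hw.mono hq1 hp (by exact hlt)
    have hd : q - p < 0 := by linarith
    rw [div_nonneg_iff]; right; constructor <;> linarith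
  · have := hw.mono hp hq1 (by exact hgt)
    have hd : q - p > 0 := by linarith
    apply div_nonneg (by linarith) (by linarith)

lemma exists_w'_pos (hw : AssumptionW w w') : ∃ p ∈ Set.Ioo (0:ℝ) 1, 0 < w' p := by
  by_contra hcon
  push_neg at hcon
  have hzero : ∀ p ∈ Set.Ioo (0:ℝ) 1, w' p = 0 := fun p hp =>
    le_antisymm (hcon p hp) (w'_nonneg hw p ⟨hp.1.le, hp.2.le⟩)
  have hftc : ∫ x in (0:ℝ)..1, w' x = w 1 - w 0 := by
    apply intervalIntegral.integral_eq_sub_of_hasDeriv_right_of_le (by norm_num)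
    · exact fun p hp => (hw.deriv p hp).continuousWithinAt
    · intro x hx
      refine (hw.deriv x ⟨hx.1.le, hx.2.le⟩).mono_of_mem_nhdsWithin ?_
      apply mem_nhdsWithin.2
      exact ⟨Set.Iio 1, isOpen_Iio, hx.2, fun q hq => ⟨le_trans hx.1.le hq.2.le, hq.1.le⟩⟩
    · exact (hw.contDeriv.mono (by rw [Set.uIcc_of_le] <;> norm_num)).intervalIntegrable
  have hval : ∫ x in (0:ℝ)..1, w' x = 0 := by
    rw [intervalIntegral.integral_of_le (by norm_num), integral_Ioc_eq_integral_Ioo]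
    rw [setIntegral_congr_fun measurableSet_Ioo hzero]
    simp
  rw [hval, hw.one, hw.zero] at hftc
  norm_num at hftc

lemma g_cont (hw : AssumptionW w w') :
    Continuous fun z => w' (stdGaussianCdf z) * stdGaussianPdf z := by
  apply Continuous.mul _ pdf_cont
  exact hw.contDeriv.comp_continuous cdf_cont fun z => ⟨(cdf_pos z).le, (cdf_lt_one z).le⟩

lemma g_nonneg (hw : AssumptionW w w') (z : ℝ) :
    0 ≤ w' (stdGaussianCdf z) * stdGaussianPdf z :=
  mul_nonneg (w'_nonneg hw _ ⟨(cdf_pos z).le, (cdf_lt_one z).le⟩) (pdf_pos z).le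

lemma main_integrable (hw : AssumptionW w w') :
    Integrable fun z => (1 + |z|) * Real.exp |z| *
      (w' (stdGaussianCdf z) * stdGaussianPdf z) := by
  obtain ⟨c, hc, α, hα, hgrow⟩ := hw.growth
  set K : ℝ := (Real.sqrt (2 * Real.pi))⁻¹ with hK
  have hKpos : 0 < K := by rw [hK]; positivity
  set β : ℝ := -α with hβdef
  have hβ0 : 0 < β := by simp [hβdef]; exact hα.2
  have hβ1 : β < 1 := by rw [hβdef]; linarith [hα.1]
  set b : ℝ := (1 - β)/4 with hbdef
  have hb : 0 < b := by rw [hbdef]; linarith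
  set M : ℝ := β/2 + (1+β)^2/(1-β) with hM
  set C : ℝ := 2 * c * K ^ α * K * Real.exp M with hC
  have hCpos : 0 < C := by
    rw [hC]; positivity
  -- pointwise bound
  have hptwise : ∀ z : ℝ, (1 + |z|) * Real.exp |z| *
      (w' (stdGaussianCdf z) * stdGaussianPdf z) ≤ C * ((1 + |z|) * Real.exp (-b * z^2)) := by
    intro z
    have hP : stdGaussianCdf z ∈ Set.Ioo (0:ℝ) 1 := ⟨cdf_pos z, cdf_lt_one z⟩
    have h1 : w' (stdGaussianCdf z) ≤ c * ((stdGaussianCdf z) ^ α + (1 - stdGaussianCdf z) ^ α) :=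
      hgrow _ hP
    have h2 : (stdGaussianCdf z) ^ α ≤ (stdGaussianPdf (|z|+1)) ^ α :=
      Real.rpow_le_rpow_of_nonpos (pdf_pos _) (cdf_lb z) hα.2.le
    have h3 : (1 - stdGaussianCdf z) ^ α ≤ (stdGaussianPdf (|z|+1)) ^ α := by
      apply Real.rpow_le_rpow_of_nonpos (pdf_pos _) _ hα.2.le
      have := cdf_ub z; linarith
    have h4 : (stdGaussianPdf (|z|+1)) ^ α = K ^ α * Real.exp (β * (|z|+1)^2 / 2) := by
      show ((Real.sqrt (2 * Real.pi))⁻¹ * Real.exp (-((|z|+1) ^ 2) / 2)) ^ α = _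
      rw [Real.mul_rpow (by positivity) (by positivity), ← Real.exp_mul]
      congr 2
      rw [hβdef]; ring
    have h5 : w' (stdGaussianCdf z) ≤ 2 * c * K ^ α * Real.exp (β * (|z|+1)^2 / 2) := by
      calc w' (stdGaussianCdf z) ≤ c * ((stdGaussianCdf z) ^ α + (1 - stdGaussianCdf z) ^ α) := h1
        _ ≤ c * ((stdGaussianPdf (|z|+1)) ^ α + (stdGaussianPdf (|z|+1)) ^ α) := by
            apply mul_le_mul_of_nonneg_left (by linarith) hc.le
        _ = 2 * c * (stdGaussianPdf (|z|+1)) ^ α := by ring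
        _ = 2 * c * K ^ α * Real.exp (β * (|z|+1)^2 / 2) := by rw [h4]; ring
    -- exponent arithmetic
    have hexp : |z| + (β * (|z|+1)^2/2 + (-(z^2)/2)) ≤ M + (-b * z^2) := by
      have ht : z^2 = |z|^2 := (sq_abs z).symm
      have h1b : (0:ℝ) < 1 - β := by linarith
      have keyq : ∀ B t : ℝ, (1 + B) * t * (1 - B) ≤ (1 + B) ^ 2 + (1 - B) * t ^ 2 / 4 * (1 - B) := by
        intro B t
        nlinarith [sq_nonneg ((1-B)*t - 2*(1+B))]
      have key : (1+β)*|z| - (1-β)*|z|^2/4 ≤ (1+β)^2/(1-β) := by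
        rw [sub_le_iff_le_add, div_add' _ _ _ (ne_of_gt h1b), le_div_iff₀ h1b]
        exact keyq β |z|
      have keyE : ∀ B t D : ℝ, ((1+B)*t - (1-B)*t^2/4 ≤ D) →
          t + (B*(t+1)^2/2 + -(t^2)/2) ≤ (B/2 + D) + (-((1-B)/4) * t^2) := by
        intro B t D hle
        nlinarith [hle]
      rw [ht, hM, hbdef]
      exact keyE β |z| _ key
    calc (1 + |z|) * Real.exp |z| * (w' (stdGaussianCdf z) * stdGaussianPdf z)
        ≤ (1 + |z|) * Real.exp |z| *
          ((2 * c * K ^ α * Real.exp (β * (|z|+1)^2 / 2)) * (K * Real.exp (-(z^2)/2))) := by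
          apply mul_le_mul_of_nonneg_left _ (by positivity)
          apply mul_le_mul h5 le_rfl (pdf_pos z).le (by positivity)
      _ = (2 * c * K ^ α * K) * ((1 + |z|) * Real.exp (|z| + (β * (|z|+1)^2/2 + (-(z^2)/2)))) := by
          rw [Real.exp_add, Real.exp_add]; ring
      _ ≤ (2 * c * K ^ α * K) * ((1 + |z|) * Real.exp (M + (-b * z^2))) := by
          apply mul_le_mul_of_nonneg_left _ (by positivity)
          apply mul_le_mul_of_nonneg_left (Real.exp_le_exp.2 hexp) (by positivity)
      _ = C * ((1 + |z|) * Real.exp (-b * z^2)) := by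
          rw [hC, Real.exp_add]; ring
  -- integrability of the bound
  have hbint : Integrable fun z : ℝ => C * ((1 + |z|) * Real.exp (-b * z^2)) := by
    apply Integrable.const_mul
    have h1 : Integrable fun z : ℝ => Real.exp (-b * z^2) := integrable_exp_neg_mul_sq hb
    have h2 : Integrable fun z : ℝ => |z| * Real.exp (-b * z^2) := by
      have := (integrable_mul_exp_neg_mul_sq hb).abs
      apply this.congr
      filter_upwards with z
      rw [abs_mul, abs_of_pos (Real.exp_pos _)]
    have := h1.add h2
    apply this.congr
    filter_upwards with z
    simp only [Pi.add_apply]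
    ring
  apply hbint.mono'
  · apply Continuous.aestronglyMeasurable
    exact ((continuous_const.add continuous_abs).mul
      (Real.continuous_exp.comp continuous_abs)).mul (g_cont hw)
  · filter_upwards with z
    rw [Real.norm_eq_abs, abs_of_nonneg (mul_nonneg (by positivity) (g_nonneg hw z))]
    exact hptwise z

lemma norm_term_le (hw : AssumptionW w w') {x z : ℝ} (hx : |x| ≤ 1) :
    ‖Real.exp (x * z) * w' (stdGaussianCdf z) * stdGaussianPdf z‖ ≤
      (1 + |z|) * Real.exp |z| * (w' (stdGaussianCdf z) * stdGaussianPdf z) := by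
  rw [Real.norm_eq_abs, mul_assoc, abs_mul, abs_of_nonneg (g_nonneg hw z),
    abs_of_pos (Real.exp_pos _)]
  have h1 : Real.exp (x * z) ≤ Real.exp |z| := by
    apply Real.exp_le_exp.2
    calc x * z ≤ |x * z| := le_abs_self _
      _ = |x| * |z| := abs_mul x z
      _ ≤ 1 * |z| := mul_le_mul_of_nonneg_right hx (abs_nonneg z)
      _ = |z| := one_mul _
  calc Real.exp (x*z) * (w' (stdGaussianCdf z) * stdGaussianPdf z)
      ≤ Real.exp |z| * (w' (stdGaussianCdf z) * stdGaussianPdf z) :=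
        mul_le_mul_of_nonneg_right h1 (g_nonneg hw z)
    _ ≤ (1 + |z|) * Real.exp |z| * (w' (stdGaussianCdf z) * stdGaussianPdf z) := by
        rw [mul_assoc]
        apply le_mul_of_one_le_left (mul_nonneg (Real.exp_pos _).le (g_nonneg hw z))
        have := abs_nonneg z; linarith

lemma norm_term_le' (hw : AssumptionW w w') {x z : ℝ} (hx : |x| ≤ 1) :
    ‖z * (Real.exp (x * z) * w' (stdGaussianCdf z) * stdGaussianPdf z)‖ ≤
      (1 + |z|) * Real.exp |z| * (w' (stdGaussianCdf z) * stdGaussianPdf z) := by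
  rw [norm_mul]
  calc ‖z‖ * ‖Real.exp (x * z) * w' (stdGaussianCdf z) * stdGaussianPdf z‖
      = |z| * (Real.exp (x*z) * (w' (stdGaussianCdf z) * stdGaussianPdf z)) := by
        rw [Real.norm_eq_abs, Real.norm_eq_abs, mul_assoc, abs_mul,
          abs_of_nonneg (g_nonneg hw z), abs_of_pos (Real.exp_pos _)]
    _ ≤ |z| * (Real.exp |z| * (w' (stdGaussianCdf z) * stdGaussianPdf z)) := by
        apply mul_le_mul_of_nonneg_left _ (abs_nonneg z)
        apply mul_le_mul_of_nonneg_right _ (g_nonneg hw z)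
        apply Real.exp_le_exp.2
        calc x * z ≤ |x * z| := le_abs_self _
          _ = |x| * |z| := abs_mul x z
          _ ≤ 1 * |z| := mul_le_mul_of_nonneg_right hx (abs_nonneg z)
          _ = |z| := one_mul _
    _ ≤ (1 + |z|) * Real.exp |z| * (w' (stdGaussianCdf z) * stdGaussianPdf z) := by
        rw [mul_assoc]
        apply mul_le_mul_of_nonneg_right _ (mul_nonneg (Real.exp_pos _).le (g_nonneg hw z))
        linarith [abs_nonneg z]

lemma term_cont (hw : AssumptionW w w') (x : ℝ) :
    Continuous fun z => Real.exp (x * z) * w' (stdGaussianCdf z) * stdGaussianPdf z := by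
  have h1 : Continuous fun z : ℝ => Real.exp (x * z) :=
    Real.continuous_exp.comp (continuous_const.mul continuous_id)
  exact (h1.mul (g_cont hw)).congr fun z => by simp only [Pi.mul_apply, mul_assoc]

lemma term_integrable (hw : AssumptionW w w') {x : ℝ} (hx : |x| ≤ 1) :
    Integrable fun z => Real.exp (x * z) * w' (stdGaussianCdf z) * stdGaussianPdf z := by
  apply (main_integrable hw).mono' (term_cont hw x).aestronglyMeasurable
  exact Eventually.of_forall fun z => norm_term_le hw hx

lemma hasDerivAt_hInt (hw : AssumptionW w w') {x₀ : ℝ} (hx : |x₀| < 1) :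
    HasDerivAt (hInt w')
      (∫ z, z * (Real.exp (x₀ * z) * w' (stdGaussianCdf z) * stdGaussianPdf z)) x₀ := by
  have hε : 0 < 1 - |x₀| := by linarith
  have key := hasDerivAt_integral_of_dominated_loc_of_deriv_le (μ := volume)
    (F := fun x z => Real.exp (x * z) * w' (stdGaussianCdf z) * stdGaussianPdf z)
    (F' := fun x z => z * (Real.exp (x * z) * w' (stdGaussianCdf z) * stdGaussianPdf z))
    (x₀ := x₀)
    (bound := fun z => (1 + |z|) * Real.exp |z| * (w' (stdGaussianCdf z) * stdGaussianPdf z))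
    (Metric.ball_mem_nhds x₀ hε)
    (Eventually.of_forall fun x => (term_cont hw x).aestronglyMeasurable)
    (term_integrable hw hx.le)
    ((continuous_id.mul (term_cont hw x₀)).aestronglyMeasurable)
    ?_ (main_integrable hw) ?_
  · exact key.2
  · refine Eventually.of_forall fun z => fun x hxball => ?_
    apply norm_term_le' hw
    rw [Metric.mem_ball, Real.dist_eq] at hxball
    calc |x| = |x - x₀ + x₀| := by ring_nf
      _ ≤ |x - x₀| + |x₀| := abs_add_le _ _
      _ ≤ 1 := by linarith
  · refine Eventually.of_forall fun z => fun x _ => ?_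
    have h1 : HasDerivAt (fun x : ℝ => x * z) z x := hasDerivAt_mul_const z
    have h2 : HasDerivAt (fun x : ℝ => Real.exp (x * z)) (Real.exp (x * z) * z) x :=
      h1.exp
    have h3 := (h2.mul_const (w' (stdGaussianCdf z))).mul_const (stdGaussianPdf z)
    convert h3 using 1
    · rfl
    ring

noncomputable def Hfun (w' : ℝ → ℝ) (x : ℝ) : ℝ :=
  ∫ z, z * (Real.exp (x * z) * w' (stdGaussianCdf z) * stdGaussianPdf z)

lemma Hfun_contAt (hw : AssumptionW w w') : ContinuousAt (Hfun w') 0 := by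
  apply continuousAt_of_dominated (μ := volume)
    (bound := fun z => (1 + |z|) * Real.exp |z| * (w' (stdGaussianCdf z) * stdGaussianPdf z))
  · filter_upwards with x
    exact (continuous_id.mul (term_cont hw x)).aestronglyMeasurable
  · filter_upwards [Metric.ball_mem_nhds (0:ℝ) one_pos] with x hx
    filter_upwards with z
    apply norm_term_le' hw
    rw [Metric.mem_ball, Real.dist_eq, sub_zero] at hx
    exact hx.le
  · exact main_integrable hw
  · filter_upwards with z
    apply Continuous.continuousAt
    have h1 : Continuous fun x : ℝ => Real.exp (x * z) :=
      Real.continuous_exp.comp (continuous_mul_right z)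
    exact continuous_const.mul ((h1.mul continuous_const).mul continuous_const)

lemma deriv_hInt_eq (hw : AssumptionW w w') {x : ℝ} (hx : |x| < 1) :
    deriv (hInt w') x = Hfun w' x := (hasDerivAt_hInt hw hx).deriv

lemma deriv_hInt_contAt (hw : AssumptionW w w') : ContinuousAt (deriv (hInt w')) 0 := by
  apply ContinuousAt.congr (Hfun_contAt hw)
  filter_upwards [Metric.ball_mem_nhds (0:ℝ) one_pos] with x hx
  rw [Metric.mem_ball, Real.dist_eq, sub_zero] at hx
  exact (deriv_hInt_eq hw hx).symm

lemma hInt_contAt (hw : AssumptionW w w') : ContinuousAt (hInt w') 0 :=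
  (hasDerivAt_hInt hw (by norm_num : |(0:ℝ)| < 1)).continuousAt

lemma hInt_zero_pos (hw : AssumptionW w w') : 0 < hInt w' 0 := by
  have heq : hInt w' 0 = ∫ z, w' (stdGaussianCdf z) * stdGaussianPdf z := by
    unfold hInt
    congr 1
    funext z
    rw [zero_mul, Real.exp_zero, one_mul]
  rw [heq]
  have hgint : Integrable fun z => w' (stdGaussianCdf z) * stdGaussianPdf z := by
    apply (main_integrable hw).mono' (g_cont hw).aestronglyMeasurable
    filter_upwards with z
    rw [Real.norm_eq_abs, abs_of_nonneg (g_nonneg hw z)]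
    have h1 : (1:ℝ) ≤ (1 + |z|) * Real.exp |z| := by
      have h2 : (1:ℝ) ≤ Real.exp |z| := Real.one_le_exp (abs_nonneg z)
      nlinarith [abs_nonneg z]
    nlinarith [g_nonneg hw z]
  refine (integral_pos_iff_support_of_nonneg (fun z => g_nonneg hw z) hgint).2 ?_
  obtain ⟨p₀, hp₀, hwp₀⟩ := exists_w'_pos hw
  obtain ⟨z₀, hz₀⟩ := cdf_surj hp₀
  have hgz₀ : 0 < w' (stdGaussianCdf z₀) * stdGaussianPdf z₀ := by
    rw [hz₀]; exact mul_pos hwp₀ (pdf_pos z₀)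
  have hev : ∀ᶠ u in 𝓝 z₀, 0 < w' (stdGaussianCdf u) * stdGaussianPdf u :=
    ((g_cont hw).continuousAt (x := z₀)).eventually_const_lt hgz₀
  obtain ⟨ε, hε, hball⟩ := Metric.eventually_nhds_iff_ball.1 hev
  calc (0:ℝ≥0∞) < volume (Metric.ball z₀ ε) := Metric.measure_ball_pos volume z₀ hε
    _ ≤ volume (Function.support fun z => w' (stdGaussianCdf z) * stdGaussianPdf z) := by
        apply measure_mono
        intro u hu
        exact ne_of_gt (hball u hu)

end Stmt6Aux

open Stmt6Aux

/-- if the autonomous ODE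
`Y'(t) = −θ²[1 + h'(−γ√Y)/(h(−γ√Y)√Y)]⁻²`, `Y(T)=0`, admits a solution that is
positive on `[0,T)`, then `θ ≠ 0` and `h'(0) = 0`. -/
theorem stmt6 (w w' : ℝ → ℝ) (hw : AssumptionW w w')
    (T γ θ : ℝ) (hT : 0 < T)
    (Y : ℝ → ℝ)
    (hYcont : ContinuousOn Y (Set.Icc 0 T))
    (hYT : Y T = 0)
    (hYpos : ∀ t ∈ Set.Ico 0 T, 0 < Y t)
    (hYode : ∀ t ∈ Set.Ico 0 T,
      HasDerivWithinAt Y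
        (-(θ ^ 2 *
          ((1 + deriv (hInt w') (-γ * Real.sqrt (Y t)) /
              (hInt w' (-γ * Real.sqrt (Y t)) * Real.sqrt (Y t))) ^ 2)⁻¹))
        (Set.Ici t) t) :
    θ ≠ 0 ∧ deriv (hInt w') 0 = 0 := by
  have hY0 : 0 < Y 0 := hYpos 0 ⟨le_refl 0, hT⟩
  have hθ : θ ≠ 0 := by
    intro hθ0
    have hconst := constant_of_has_deriv_right_zero hYcont (fun t ht => by
      simpa [hθ0] using hYode t ht)
    have := hconst T ⟨hT.le, le_refl T⟩
    rw [hYT] at this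
    linarith
  refine ⟨hθ, ?_⟩
  by_contra hd
  set d : ℝ := deriv (hInt w') 0 with hddef
  set m : ℝ := hInt w' 0 with hmdef
  have hm : 0 < m := hInt_zero_pos hw
  clear_value d m
  have hdpos : 0 < |d| := abs_pos.2 hd
  have hθ2 : 0 < θ ^ 2 := lt_of_le_of_ne (sq_nonneg θ) (Ne.symm (pow_ne_zero 2 hθ))
  -- continuity data
  obtain ⟨δ₁, hδ₁, h1⟩ := Metric.continuousAt_iff.1 (hInt_contAt hw) (m/2) (by positivity)
  obtain ⟨δ₂, hδ₂, h2⟩ := Metric.continuousAt_iff.1 (deriv_hInt_contAt hw) (|d|/2) (by positivity)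
  set δ : ℝ := min δ₁ δ₂ with hδdef
  have hδ : 0 < δ := lt_min hδ₁ hδ₂
  have hδle1 : δ ≤ δ₁ := min_le_left _ _
  have hδle2 : δ ≤ δ₂ := min_le_right _ _
  clear_value δ
  set s : ℝ := min (δ/(1+|γ|)) (|d|/(6*m)) with hsdef
  have hs : 0 < s := by
    apply lt_min
    · apply div_pos hδ; linarith [abs_nonneg γ]
    · positivity
  have hsle1 : s ≤ δ/(1+|γ|) := min_le_left _ _
  have hsle2 : s ≤ |d|/(6*m) := min_le_right _ _
  clear_value s
  set C : ℝ := 36 * m^2 * θ^2 / d^2 with hCdef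
  have hd2 : 0 < d^2 := lt_of_le_of_ne (sq_nonneg d) (Ne.symm (pow_ne_zero 2 hd))
  have hC : 0 < C := by rw [hCdef]; positivity
  clear_value C
  -- find t₀
  have hYTc : Tendsto Y (𝓝[Set.Icc 0 T] T) (𝓝 0) := by
    have := hYcont T ⟨hT.le, le_refl T⟩
    rw [ContinuousWithinAt, hYT] at this
    exact this
  have hev : ∀ᶠ t in 𝓝 T, t ∈ Set.Icc 0 T → Y t < s^2 :=
    eventually_nhdsWithin_iff.1 (hYTc.eventually_lt_const (by positivity : (0:ℝ) < s^2))
  obtain ⟨η, hη, hball⟩ := Metric.eventually_nhds_iff.1 hev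
  set t₀ : ℝ := max 0 (T - η/2) with ht₀def
  have ht₀0 : 0 ≤ t₀ := le_max_left _ _
  have ht₀T : t₀ < T := max_lt hT (by linarith)
  have ht₀η : T - η/2 ≤ t₀ := le_max_right _ _
  clear_value t₀
  have hsmall : ∀ t ∈ Set.Icc t₀ T, Y t < s^2 := by
    intro t ht
    refine hball ?_ ⟨le_trans ht₀0 ht.1, ht.2⟩
    rw [Real.dist_eq, abs_sub_comm, abs_of_nonneg (by linarith [ht.2] : (0:ℝ) ≤ T - t)]
    have h4 := ht.1
    linarith [ht₀η]
  -- the key derivative bound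
  have hstep : ∀ t ∈ Set.Ico t₀ T,
      θ ^ 2 * ((1 + deriv (hInt w') (-γ * Real.sqrt (Y t)) /
        (hInt w' (-γ * Real.sqrt (Y t)) * Real.sqrt (Y t))) ^ 2)⁻¹ ≤ C * Y t := by
    intro t ht
    have hy : 0 < Y t := hYpos t ⟨le_trans ht₀0 ht.1, ht.2⟩
    have hys : Y t < s^2 := hsmall t ⟨ht.1, ht.2.le⟩
    set r : ℝ := Real.sqrt (Y t) with hrdef
    have hr : 0 < r := Real.sqrt_pos.2 hy
    have hr2 : r^2 = Y t := Real.sq_sqrt hy.le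
    have hrs : r < s := by
      rw [hrdef, show s = Real.sqrt (s^2) by rw [Real.sqrt_sq hs.le]]
      exact Real.sqrt_lt_sqrt hy.le hys
    clear_value r
    set x : ℝ := -γ * r with hxdef
    have hxδ : |x| < δ := by
      rw [hxdef, abs_mul, abs_neg, abs_of_pos hr]
      have hgs : (1 + |γ|) * s ≤ δ := by
        have h5 : s ≤ δ/(1+|γ|) := hsle1
        rw [le_div_iff₀ (by linarith [abs_nonneg γ] : (0:ℝ) < 1 + |γ|)] at h5
        linarith [h5]
      have h6 : |γ| * r ≤ |γ| * s := mul_le_mul_of_nonneg_left hrs.le (abs_nonneg γ)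
      nlinarith [hs]
    have hrd : r ≤ |d|/(6*m) := le_of_lt (lt_of_lt_of_le hrs hsle2)
    clear_value x
    set hx : ℝ := hInt w' x with hhxdef
    set Hx : ℝ := deriv (hInt w') x with hHxdef
    have hxd : dist x 0 < δ₁ := by
      rw [Real.dist_eq, sub_zero]; exact lt_of_lt_of_le hxδ hδle1
    have hxd2 : dist x 0 < δ₂ := by
      rw [Real.dist_eq, sub_zero]; exact lt_of_lt_of_le hxδ hδle2
    have hb1 : |hx - m| < m/2 := by
      have h7 := h1 hxd; rw [Real.dist_eq, ← hmdef, ← hhxdef] at h7; exact h7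
    have hb2 : |Hx - d| < |d|/2 := by
      have h7 := h2 hxd2; rw [Real.dist_eq, ← hddef, ← hHxdef] at h7; exact h7
    clear_value hx Hx
    have hxlow : m/2 < hx := by
      rcases abs_lt.1 hb1 with ⟨hl, _⟩; linarith
    have hxhigh : hx < 3*m/2 := by
      rcases abs_lt.1 hb1 with ⟨_, hh⟩; linarith
    have hHlow : |d|/2 ≤ |Hx| := by
      have := abs_sub_abs_le_abs_sub d Hx
      rw [abs_sub_comm] at hb2
      linarith
    set q : ℝ := Hx / (hx * r) with hqdef
    have hhr : 0 < hx * r := mul_pos (by linarith) hr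
    clear hb1 hb2 hxd hxd2 hxδ
    clear hYode hYcont hYT hYpos hYTc hev hball hsmall h1 h2 hη ht₀0 ht₀T ht₀η hrs hys
    clear hY0 hθ hδ hδle1 hδle2 hδ₁ hδ₂ hs hsle1 hsle2 hT hrdef hxdef hhxdef hHxdef
    clear hddef hmdef hδdef hsdef ht₀def
    have hq2 : 2 ≤ |q| := by
      rw [hqdef, abs_div, abs_of_pos hhr, le_div_iff₀ hhr]
      have e1 : hx * r ≤ (3*m/2) * (|d|/(6*m)) :=
        mul_le_mul hxhigh.le hrd hr.le (by linarith)
      have e2 : (3*m/2) * (|d|/(6*m)) = |d|/4 := by field_simp; ring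
      linarith [hHlow, e1, e2.symm ▸ e1]
    have hB : |d|/(6*m*r) ≤ |1 + q| := by
      have t1 : |q| - 1 ≤ |1 + q| := by
        have t0 : |q| ≤ |1 + q| + 1 := by
          calc |q| = |(1 + q) + (-1)| := by congr 1; ring
            _ ≤ |1 + q| + |(-1:ℝ)| := abs_add_le _ _
            _ = |1 + q| + 1 := by norm_num
        linarith
      have t2 : |q| / 2 ≤ |q| - 1 := by linarith
      have t3 : |d|/(6*m*r) ≤ |q|/2 := by
        rw [hqdef, abs_div, abs_of_pos hhr, div_div,
          div_le_div_iff₀ (by positivity) (by positivity : (0:ℝ) < hx * r * 2)]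
        have f1 : |d| * (hx * r * 2) ≤ |d| * ((3*m/2) * r * 2) := by
          apply mul_le_mul_of_nonneg_left _ hdpos.le
          nlinarith [hr]
        have f2 : (|d|/2) * (6*m*r) ≤ |Hx| * (6*m*r) :=
          mul_le_mul_of_nonneg_right hHlow (by positivity)
        nlinarith [f1, f2]
      linarith
    have hBsq : d^2/(36*m^2*(Y t)) ≤ (1 + q)^2 := by
      have e1 : (|d|/(6*m*r))^2 ≤ |1 + q|^2 := by
        apply pow_le_pow_left₀ (by positivity) hB
      rw [sq_abs] at e1
      have e2 : (|d|/(6*m*r))^2 = d^2/(36*m^2*(Y t)) := by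
        rw [div_pow, sq_abs]
        congr 1
        rw [← hr2]; ring
      rw [e2] at e1
      exact e1
    have hBpos : 0 < d^2/(36*m^2*(Y t)) := by positivity
    have hinv : ((1 + q)^2)⁻¹ ≤ (d^2/(36*m^2*(Y t)))⁻¹ :=
      inv_anti₀ hBpos hBsq
    have hinv2 : (d^2/(36*m^2*(Y t)))⁻¹ = 36*m^2*(Y t)/d^2 := by
      rw [inv_div]
    calc θ ^ 2 * ((1 + q) ^ 2)⁻¹ ≤ θ^2 * (36*m^2*(Y t)/d^2) := by
          rw [← hinv2]
          exact mul_le_mul_of_nonneg_left hinv hθ2.le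
      _ = C * Y t := by rw [hCdef]; field_simp
  -- monotonicity argument
  set f : ℝ → ℝ := fun t => -(Y t * Real.exp (C * t)) with hfdef
  have hIccsub : Set.Icc t₀ T ⊆ Set.Icc 0 T := Set.Icc_subset_Icc ht₀0 le_rfl
  have hfc : ContinuousOn f (Set.Icc t₀ T) :=
    ((hYcont.mono hIccsub).mul
      (Real.continuous_exp.comp (continuous_const.mul continuous_id)).continuousOn).neg
  have hfd : ∀ t ∈ Set.Ico t₀ T, HasDerivWithinAt f
      (-((-(θ ^ 2 * ((1 + deriv (hInt w') (-γ * Real.sqrt (Y t)) /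
              (hInt w' (-γ * Real.sqrt (Y t)) * Real.sqrt (Y t))) ^ 2)⁻¹)) * Real.exp (C*t)
        + Y t * (Real.exp (C*t) * C))) (Set.Ici t) t := by
    intro t ht
    have hY' := hYode t ⟨le_trans ht₀0 ht.1, ht.2⟩
    have hlin : HasDerivAt (fun u : ℝ => C * u) C t := by
      simpa using (hasDerivAt_id t).const_mul C
    have hexp : HasDerivAt (fun u : ℝ => Real.exp (C * u)) (Real.exp (C*t) * C) t :=
      (Real.hasDerivAt_exp (C*t)).comp t hlin
    exact (hY'.mul hexp.hasDerivWithinAt).neg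
  have hmain := image_le_of_deriv_right_le_deriv_boundary (B := fun _ => f t₀)
    (B' := fun _ => (0:ℝ)) hfc hfd (le_refl (f t₀)) continuousOn_const
    (fun x _ => hasDerivWithinAt_const x _ (f t₀)) ?_
  · have hfT : -(Y T * Real.exp (C*T)) ≤ -(Y t₀ * Real.exp (C*t₀)) :=
      hmain ⟨ht₀T.le, le_refl T⟩
    rw [hYT] at hfT
    have hYt₀ : 0 < Y t₀ := hYpos t₀ ⟨ht₀0, ht₀T⟩
    nlinarith [mul_pos hYt₀ (Real.exp_pos (C * t₀)), hfT]
  · intro t ht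
    have hkey := hstep t ht
    have hE := Real.exp_pos (C * t)
    have := mul_le_mul_of_nonneg_right hkey hE.le
    nlinarith [this]
end

section
/- Let τ > 0 and let l:(0,τ]×(0,∞)→ℝ be continuous and bounded. Suppose there exists a function α:[0,τ]→ℝ, continuous on [0,τ] and continuously differentiable on (0,τ], such that α(0) = 0, α(t) > 0 for all t∈(0,τ], and l(t,α(t)) ≥ α'(t) for all t∈(0,τ). Then there exists a function y:[0,τ]→ℝ, continuous on [0,τ] and continuously differentiable on (0,τ], such that y(0) = 0, y(t) ≥ α(t) for all t∈[0,τ], and y'(t) = l(t,y(t)) for all t∈(0,τ]. -/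
open MeasureTheory Set Filter Topology

/-- Tonelli delayed iteration. -/
noncomputable def stmt8ton (F : ℝ → ℝ → ℝ) (ε δ c : ℝ) : ℕ → ℝ → ℝ
  | 0 => fun _ => c
  | (k+1) => fun t => c + ∫ s in ε..(max ε (t - δ)), F s (stmt8ton F ε δ c k s)

section ton

variable {F : ℝ → ℝ → ℝ} {M τ ε δ : ℝ}
variable (hFc : ContinuousOn (Function.uncurry F) (Set.Ioc 0 τ ×ˢ (univ : Set ℝ)))
variable (hFb : ∀ t ∈ Set.Ioc 0 τ, ∀ x : ℝ, |F t x| ≤ M)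

include hFc in
lemma stmt8_comp_cont {w : ℝ → ℝ} {a : ℝ} (ha : 0 < a)
    (hw : ContinuousOn w (Icc a τ)) :
    ContinuousOn (fun s => F s (w s)) (Icc a τ) := by
  have : ContinuousOn (fun s => Function.uncurry F (s, w s)) (Icc a τ) :=
    hFc.comp (continuousOn_id.prodMk hw)
      (fun s hs => ⟨⟨ha.trans_le hs.1, hs.2⟩, mem_univ _⟩)
  exact this

include hFb in
lemma stmt8_int_bound {g : ℝ → ℝ} {a : ℝ} (ha : 0 < a)
    (hg : ContinuousOn g (Icc a τ))
    (hb : ∀ s ∈ Icc a τ, |g s| ≤ M)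
    {u v : ℝ} (hu : u ∈ Icc a τ) (hv : v ∈ Icc a τ) :
    |∫ s in v..u, g s| ≤ M * |u - v| := by
  have hsub : Set.uIoc v u ⊆ Icc a τ :=
    (Set.uIoc_subset_uIcc).trans (Set.uIcc_subset_Icc hv hu)
  have := intervalIntegral.norm_integral_le_of_norm_le_const
    (f := g) (C := M) (a := v) (b := u) (fun x hx => hb x (hsub hx))
  simpa [Real.norm_eq_abs] using this

lemma stmt8_max_mem {a t δ : ℝ} (ha : a ∈ Icc a τ) (ht : t ∈ Icc a τ) (hδ : 0 < δ) :
    max a (t - δ) ∈ Icc a τ :=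
  ⟨le_max_left _ _, max_le ha.2 (by linarith [ht.2])⟩

include hFc in
lemma stmt8ton_cont (hε : 0 < ε) (hετ : ε ≤ τ) (hδ : 0 < δ) (c : ℝ) :
    ∀ k, ContinuousOn (stmt8ton F ε δ c k) (Icc ε τ) := by
  intro k
  induction k with
  | zero => exact continuousOn_const
  | succ k ih =>
    have hg : ContinuousOn (fun s => F s (stmt8ton F ε δ c k s)) (Icc ε τ) :=
      stmt8_comp_cont hFc hε ih
    have hint : IntegrableOn (fun s => F s (stmt8ton F ε δ c k s)) (Icc ε τ) :=
      hg.integrableOn_compact isCompact_Icc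
    have hG : ContinuousOn (fun u => ∫ s in ε..u, F s (stmt8ton F ε δ c k s)) (Icc ε τ) := by
      have := intervalIntegral.continuousOn_primitive_interval
        (f := fun s => F s (stmt8ton F ε δ c k s)) (μ := volume) (a := ε) (b := τ)
        (by rwa [Set.uIcc_of_le hετ])
      rwa [Set.uIcc_of_le hετ] at this
    have hP : ContinuousOn (fun t : ℝ => max ε (t - δ)) (Icc ε τ) :=
      (continuous_const.max (continuous_id.sub continuous_const)).continuousOn
    show ContinuousOn (fun t => c + ∫ s in ε..(max ε (t - δ)), F s (stmt8ton F ε δ c k s)) _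
    exact continuousOn_const.add
      (hG.comp hP (fun t ht => stmt8_max_mem ⟨le_refl _, hετ⟩ ht hδ))

lemma stmt8ton_stab (hε : 0 < ε) (hετ : ε ≤ τ) (hδ : 0 < δ) (c : ℝ) :
    ∀ k : ℕ, ∀ t ∈ Icc ε τ, t ≤ ε + k * δ →
      stmt8ton F ε δ c (k+1) t = stmt8ton F ε δ c k t := by
  intro k
  induction k with
  | zero =>
    intro t ht hk
    have h1 : max ε (t - δ) = ε := max_eq_left (by push_cast at hk; linarith)
    show c + ∫ s in ε..(max ε (t - δ)), F s c = c
    rw [h1, intervalIntegral.integral_same, add_zero]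
  | succ k ih =>
    intro t ht hk
    show c + ∫ s in ε..(max ε (t - δ)), F s (stmt8ton F ε δ c (k+1) s)
       = c + ∫ s in ε..(max ε (t - δ)), F s (stmt8ton F ε δ c k s)
    congr 1
    apply intervalIntegral.integral_congr
    intro s hs
    rw [Set.uIcc_of_le (le_max_left _ _)] at hs
    have hsε : s ∈ Icc ε τ := ⟨hs.1, hs.2.trans (stmt8_max_mem ⟨le_refl _, hετ⟩ ht hδ).2⟩
    have hsk : s ≤ ε + k * δ := by
      have : max ε (t - δ) ≤ ε + k * δ := by
        apply max_le (le_add_of_nonneg_right (by positivity))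
        push_cast at hk ⊢; linarith
      exact hs.2.trans this
    show F s (stmt8ton F ε δ c (k+1) s) = F s (stmt8ton F ε δ c k s)
    rw [ih s hsε hsk]

include hFc in
lemma stmt8ton_exists (hε : 0 < ε) (hετ : ε ≤ τ) (hδ : 0 < δ) (c : ℝ) :
    ∃ y : ℝ → ℝ, ContinuousOn y (Icc ε τ) ∧
      ∀ t ∈ Icc ε τ, y t = c + ∫ s in ε..(max ε (t - δ)), F s (y s) := by
  obtain ⟨K, hK⟩ := exists_nat_ge ((τ - ε) / δ)
  refine ⟨stmt8ton F ε δ c K, stmt8ton_cont hFc hε hετ hδ c K, fun t ht => ?_⟩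
  have htK : t ≤ ε + K * δ := by
    have : (τ - ε) / δ * δ ≤ K * δ := mul_le_mul_of_nonneg_right hK hδ.le
    rw [div_mul_cancel₀ _ hδ.ne'] at this
    linarith [ht.2]
  have h2 := stmt8ton_stab (F := F) hε hετ hδ c K t ht htK
  rw [← h2]
  rfl

section main

variable {τ : ℝ} (hτ : 0 < τ)

theorem stmt8' (τ : ℝ) (hτ : 0 < τ)
    (l : ℝ → ℝ → ℝ)
    (hlc : ContinuousOn (Function.uncurry l) (Set.Ioc 0 τ ×ˢ Set.Ioi 0))
    (hlb : ∃ M : ℝ, ∀ t ∈ Set.Ioc 0 τ, ∀ y ∈ Set.Ioi (0:ℝ), |l t y| ≤ M)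
    (α α' : ℝ → ℝ)
    (hαc : ContinuousOn α (Set.Icc 0 τ))
    (hαd : ∀ t ∈ Set.Ioc 0 τ, HasDerivWithinAt α (α' t) (Set.Ioc 0 τ) t)
    (hα'c : ContinuousOn α' (Set.Ioc 0 τ))
    (hα0 : α 0 = 0)
    (hαpos : ∀ t ∈ Set.Ioc 0 τ, 0 < α t)
    (hineq : ∀ t ∈ Set.Ioo 0 τ, α' t ≤ l t (α t)) :
    ∃ y : ℝ → ℝ, ContinuousOn y (Set.Icc 0 τ) ∧ y 0 = 0 ∧
      (∀ t ∈ Set.Icc 0 τ, α t ≤ y t) ∧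
      ∀ t ∈ Set.Ioc 0 τ, HasDerivWithinAt y (l t (y t)) (Set.Ioc 0 τ) t := by
  classical
  obtain ⟨M, hM⟩ := hlb
  set F : ℝ → ℝ → ℝ := fun t x => l t (max x (α t)) with hFdef
  -- basic facts about F
  have hFb : ∀ t ∈ Set.Ioc 0 τ, ∀ x : ℝ, |F t x| ≤ M := by
    intro t ht x
    exact hM t ht _ (lt_max_of_lt_right (hαpos t ht))
  have hM0 : 0 ≤ M := le_trans (abs_nonneg _) (hFb τ ⟨hτ, le_refl τ⟩ 0)
  have hFc : ContinuousOn (Function.uncurry F) (Set.Ioc 0 τ ×ˢ (univ : Set ℝ)) := by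
    have hmap : ContinuousOn (fun p : ℝ × ℝ => (p.1, max p.2 (α p.1)))
        (Set.Ioc 0 τ ×ˢ (univ : Set ℝ)) := by
      apply (continuous_fst.continuousOn).prodMk
      have hα1 : ContinuousOn (fun p : ℝ × ℝ => α p.1) (Set.Ioc 0 τ ×ˢ (univ : Set ℝ)) :=
        (hαc.mono Ioc_subset_Icc_self).comp (continuous_fst.continuousOn) (fun p hp => hp.1)
      exact continuous_max.comp_continuousOn ((continuous_snd.continuousOn).prodMk hα1)
    exact hlc.comp hmap (fun p hp => ⟨hp.1, lt_max_of_lt_right (hαpos p.1 hp.1)⟩)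
  -- the approximating sequence
  set εn : ℕ → ℝ := fun n => τ / (n + 1) with hεdef
  have hεpos : ∀ n, 0 < εn n := fun n => div_pos hτ (by positivity)
  have hετ : ∀ n, εn n ≤ τ := fun n => div_le_self hτ.le (by push_cast; linarith)
  have hεlim : Tendsto εn atTop (𝓝 0) := by
    have h1 : Tendsto (fun n : ℕ => 1 / ((n : ℝ) + 1)) atTop (𝓝 0) :=
      tendsto_one_div_add_atTop_nhds_zero_nat
    have := h1.const_mul τ
    simp only [mul_one_div, mul_zero] at this
    exact this
  choose yy hyc hyfix using fun n =>
    stmt8ton_exists hFc (hεpos n) (hετ n) (hεpos n) (α (εn n))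
  have hgc : ∀ n, ContinuousOn (fun s => F s (yy n s)) (Icc (εn n) τ) :=
    fun n => stmt8_comp_cont hFc (hεpos n) (hyc n)
  have hgb : ∀ n, ∀ s ∈ Icc (εn n) τ, |F s (yy n s)| ≤ M :=
    fun n s hs => hFb s ⟨lt_of_lt_of_le (hεpos n) hs.1, hs.2⟩ _
  -- difference formula
  have hdiff : ∀ n, ∀ u ∈ Icc (εn n) τ, ∀ v ∈ Icc (εn n) τ,
      yy n u - yy n v
        = ∫ s in (max (εn n) (v - εn n))..(max (εn n) (u - εn n)), F s (yy n s) := by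
    intro n u hu v hv
    have hPu := stmt8_max_mem (τ := τ) ⟨le_refl _, hετ n⟩ hu (hεpos n)
    have hPv := stmt8_max_mem (τ := τ) ⟨le_refl _, hετ n⟩ hv (hεpos n)
    have hεm : εn n ∈ Icc (εn n) τ := ⟨le_refl _, hετ n⟩
    have hint : ∀ a ∈ Icc (εn n) τ, ∀ b ∈ Icc (εn n) τ,
        IntervalIntegrable (fun s => F s (yy n s)) volume a b := by
      intro a ha b hb
      exact ((hgc n).mono (Set.uIcc_subset_Icc ha hb)).intervalIntegrable
    have hadj := intervalIntegral.integral_add_adjacent_intervals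
      (hint _ hεm _ hPv) (hint _ hPv _ hPu)
    rw [hyfix n u hu, hyfix n v hv]
    linarith [hadj]
  -- Lipschitz estimate
  have hlip : ∀ n, ∀ u ∈ Icc (εn n) τ, ∀ v ∈ Icc (εn n) τ,
      |yy n u - yy n v| ≤ M * |u - v| := by
    intro n u hu v hv
    rw [hdiff n u hu v hv]
    have hPu := stmt8_max_mem (τ := τ) ⟨le_refl _, hετ n⟩ hu (hεpos n)
    have hPv := stmt8_max_mem (τ := τ) ⟨le_refl _, hετ n⟩ hv (hεpos n)
    have h1 := stmt8_int_bound (τ := τ) hFb (hεpos n) (hgc n) (hgb n) hPu hPv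
    refine h1.trans ?_
    apply mul_le_mul_of_nonneg_left ?_ hM0
    calc |max (εn n) (u - εn n) - max (εn n) (v - εn n)|
        = |max (u - εn n) (εn n) - max (v - εn n) (εn n)| := by rw [max_comm, max_comm (εn n)]
      _ ≤ |(u - εn n) - (v - εn n)| := abs_max_sub_max_le_abs _ _ _
      _ = |u - v| := by ring_nf
  -- initial value
  have hval : ∀ n, yy n (εn n) = α (εn n) := by
    intro n
    have := hyfix n (εn n) ⟨le_refl _, hετ n⟩
    rw [max_eq_left (by linarith [hεpos n]), intervalIntegral.integral_same, add_zero] at this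
    exact this
  -- uniform bound
  obtain ⟨Cα, hCα⟩ := IsCompact.exists_bound_of_continuousOn isCompact_Icc hαc
  have hbound : ∀ n, ∀ u ∈ Icc (εn n) τ, |yy n u| ≤ Cα + M * τ := by
    intro n u hu
    have hεm : εn n ∈ Icc (εn n) τ := ⟨le_refl _, hετ n⟩
    have h1 := hlip n u hu _ hεm
    have h2 : |α (εn n)| ≤ Cα := hCα (εn n) ⟨(hεpos n).le, hετ n⟩
    have h3 : |u - εn n| ≤ τ := by
      rw [abs_of_nonneg (by linarith [hu.1])]
      linarith [hu.2, hεpos n]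
    have h2' : |yy n (εn n)| ≤ Cα := by rw [hval n]; exact h2
    calc |yy n u| ≤ |yy n u - yy n (εn n)| + |yy n (εn n)| := by
          have := abs_add_le (yy n u - yy n (εn n)) (yy n (εn n)); simpa using this
      _ ≤ M * τ + Cα :=
          add_le_add (h1.trans (mul_le_mul_of_nonneg_left h3 hM0)) h2'
      _ = Cα + M * τ := by ring
  -- pack into continuous bounded maps on Icc 0 τ
  have h0τ : ∀ (x : Icc 0 τ) (n : ℕ), max x.1 (εn n) ∈ Icc (εn n) τ :=
    fun x n => ⟨le_max_right _ _, max_le x.2.2 (hετ n)⟩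
  set fn : ℕ → C(Icc 0 τ, ℝ) := fun n =>
    ⟨fun x => yy n (max x.1 (εn n)),
      (hyc n).comp_continuous (continuous_subtype_val.max continuous_const)
        (fun x => h0τ x n)⟩ with hfndef
  set B : ℕ → (BoundedContinuousFunction (Icc 0 τ) ℝ) := fun n => BoundedContinuousFunction.mkOfCompact (fn n) with hBdef
  have hBapp : ∀ (n : ℕ) (x : Icc 0 τ), B n x = yy n (max x.1 (εn n)) := fun n x => rfl
  have hin : ∀ (f : BoundedContinuousFunction (Icc 0 τ) ℝ) (x : Icc 0 τ), f ∈ Set.range B →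
      f x ∈ Icc (-(Cα + M * τ)) (Cα + M * τ) := by
    rintro f x ⟨n, rfl⟩
    have h1 := hbound n _ (h0τ x n)
    rw [hBapp]
    constructor
    · linarith [abs_le.mp h1 |>.1]
    · linarith [abs_le.mp h1 |>.2]
  have hH : ∀ (x y : Icc 0 τ) (i : Set.range B),
      dist ((i : BoundedContinuousFunction (Icc 0 τ) ℝ) x)
        ((i : BoundedContinuousFunction (Icc 0 τ) ℝ) y) ≤ M * dist x y := by
    intro x y i
    obtain ⟨n, hn⟩ := i.2
    have hx := h0τ x n
    have hy := h0τ y n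
    calc dist ((i : BoundedContinuousFunction (Icc 0 τ) ℝ) x) ((i : BoundedContinuousFunction (Icc 0 τ) ℝ) y) = |yy n (max x.1 (εn n)) - yy n (max y.1 (εn n))| := by
          rw [← hn, hBapp, hBapp, Real.dist_eq]
      _ ≤ M * |max x.1 (εn n) - max y.1 (εn n)| := hlip n _ hx _ hy
      _ ≤ M * |x.1 - y.1| := by
          have hmm : |max x.1 (εn n) - max y.1 (εn n)| ≤ |x.1 - y.1| :=
            abs_max_sub_max_le_abs _ _ _
          exact mul_le_mul_of_nonneg_left hmm hM0
      _ = M * dist x y := by rw [Subtype.dist_eq, Real.dist_eq]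
  have hblim : Tendsto (fun d : ℝ => M * d) (𝓝 0) (𝓝 0) := by
    have h1 : Tendsto (fun d : ℝ => M * d) (𝓝 0) (𝓝 (M * 0)) :=
      (continuous_const.mul continuous_id).tendsto 0
    simpa using h1
  have hequi : Equicontinuous
      (fun f : (Set.range B) => ((f : BoundedContinuousFunction (Icc 0 τ) ℝ) : Icc 0 τ → ℝ)) :=
    Metric.equicontinuous_of_continuity_modulus (fun d => M * d) hblim _ hH
  have hcomp := BoundedContinuousFunction.arzela_ascoli
    (Icc (-(Cα + M * τ)) (Cα + M * τ)) isCompact_Icc (Set.range B) hin hequi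
  obtain ⟨Y, -, φ, hφmono, hφconv⟩ :=
    hcomp.tendsto_subseq (fun n => subset_closure (Set.mem_range_self n))
  have hpt : ∀ x : Icc 0 τ, Tendsto (fun k => yy (φ k) (max x.1 (εn (φ k)))) atTop (𝓝 (Y x)) := by
    intro x
    have h1 : Tendsto (fun k => dist (B (φ k)) Y) atTop (𝓝 0) :=
      tendsto_iff_dist_tendsto_zero.mp hφconv
    have h2 : ∀ k, dist (B (φ k) x) (Y x) ≤ dist (B (φ k)) Y :=
      fun k => BoundedContinuousFunction.dist_coe_le_dist x
    have h3 := squeeze_zero (fun k => dist_nonneg) h2 h1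
    have h4 : Tendsto (fun k => B (φ k) x) atTop (𝓝 (Y x)) :=
      tendsto_iff_dist_tendsto_zero.mpr h3
    simpa only [hBapp] using h4
  -- the limit function, extended to all of ℝ
  have hZmem : ∀ t : ℝ, min (max t 0) τ ∈ Icc 0 τ :=
    fun t => ⟨le_min (le_max_right _ _) hτ.le, min_le_right _ _⟩
  set Z : ℝ → ℝ := fun t => Y ⟨min (max t 0) τ, hZmem t⟩ with hZdef
  have hZc : Continuous Z :=
    Y.continuous.comp (Continuous.subtype_mk
      ((continuous_id.max continuous_const).min continuous_const) _)
  have hZeq : ∀ t, ∀ ht : t ∈ Icc 0 τ, Z t = Y ⟨t, ht⟩ := by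
    intro t ht
    have : (⟨min (max t 0) τ, hZmem t⟩ : Icc 0 τ) = ⟨t, ht⟩ :=
      Subtype.ext (by simp [max_eq_left ht.1, min_eq_left ht.2])
    rw [hZdef]; simp only []; rw [this]
  have hptt : ∀ t, t ∈ Icc 0 τ → Tendsto (fun k => yy (φ k) (max t (εn (φ k)))) atTop (𝓝 (Z t)) := by
    intro t ht; rw [hZeq t ht]; exact hpt ⟨t, ht⟩
  have hεφ : Tendsto (fun k => εn (φ k)) atTop (𝓝 0) := hεlim.comp hφmono.tendsto_atTop
  -- value at 0
  have h0mem : (0:ℝ) ∈ Icc 0 τ := ⟨le_refl _, hτ.le⟩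
  have hZ0 : Z 0 = 0 := by
    have ht1 := hptt 0 h0mem
    have heq : ∀ k, yy (φ k) (max 0 (εn (φ k))) = α (εn (φ k)) := by
      intro k
      rw [max_eq_right (hεpos _).le, hval]
    simp only [heq] at ht1
    have ht2 : Tendsto (fun k => α (εn (φ k))) atTop (𝓝 0) := by
      have hc : ContinuousWithinAt α (Icc 0 τ) 0 := hαc 0 h0mem
      have h5 := hc.tendsto.comp
        (tendsto_nhdsWithin_of_tendsto_nhds_of_eventually_within _ hεφ
          (Eventually.of_forall fun k => ⟨(hεpos _).le, hετ _⟩))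
      rw [hα0] at h5
      exact h5
    exact tendsto_nhds_unique ht1 ht2
  -- the integral equation for the limit function
  have hInt : ∀ s t : ℝ, 0 < s → s ≤ t → t ≤ τ →
      Z t = Z s + ∫ u in s..t, F u (Z u) := by
    intro s t hs hst htτ
    have hsm : s ∈ Icc 0 τ := ⟨hs.le, hst.trans htτ⟩
    have htm : t ∈ Icc 0 τ := ⟨(hs.trans_le hst).le, htτ⟩
    have hev : ∀ᶠ k in atTop, εn (φ k) < s := hεφ.eventually (gt_mem_nhds hs)
    -- continuity of the modified integrands
    have hwc : ∀ n : ℕ, ContinuousOn (fun u => F u (yy n (max u (εn n)))) (Icc s t) := by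
      intro n
      have hw : ContinuousOn (fun u => yy n (max u (εn n))) (Icc s t) :=
        (hyc n).comp ((continuous_id.max continuous_const).continuousOn)
          (fun u hu => ⟨le_max_right _ _, max_le (hu.2.trans htτ) (hετ n)⟩)
      exact hFc.comp (continuousOn_id.prodMk hw)
        (fun u hu => ⟨⟨hs.trans_le hu.1, hu.2.trans htτ⟩, mem_univ _⟩)
    have hIsub : Set.uIoc s t ⊆ Icc s t := by
      rw [Set.uIoc_of_le hst]
      exact Ioc_subset_Icc_self
    -- dominated convergence
    have hki : Tendsto (fun k => ∫ u in s..t, F u (yy (φ k) (max u (εn (φ k)))))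
        atTop (𝓝 (∫ u in s..t, F u (Z u))) := by
      apply intervalIntegral.tendsto_integral_filter_of_dominated_convergence (fun _ => M)
      · exact Eventually.of_forall fun k =>
          ((hwc (φ k)).mono hIsub).aestronglyMeasurable measurableSet_uIoc
      · refine Eventually.of_forall fun k => Eventually.of_forall fun u hu => ?_
        have hu' := hIsub hu
        exact hFb u ⟨hs.trans_le hu'.1, hu'.2.trans htτ⟩ _
      · exact intervalIntegrable_const
      · refine Eventually.of_forall fun u hu => ?_
        have hu' := hIsub hu
        have humem : u ∈ Icc 0 τ := ⟨(hs.trans_le hu'.1).le, hu'.2.trans htτ⟩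
        have h1 : Tendsto (fun k => yy (φ k) (max u (εn (φ k)))) atTop (𝓝 (Z u)) :=
          hptt u humem
        have h2 : Tendsto (fun k => ((u, yy (φ k) (max u (εn (φ k)))) : ℝ × ℝ)) atTop
            (𝓝[Set.Ioc 0 τ ×ˢ (univ : Set ℝ)] (u, Z u)) :=
          tendsto_nhdsWithin_of_tendsto_nhds_of_eventually_within _
            (tendsto_const_nhds.prodMk_nhds h1)
            (Eventually.of_forall fun k => ⟨⟨hs.trans_le hu'.1, hu'.2.trans htτ⟩, mem_univ _⟩)
        have h3 := ((hFc (u, Z u) ⟨⟨hs.trans_le hu'.1, hu'.2.trans htτ⟩, mem_univ _⟩).tendsto).comp h2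
        exact h3
    -- error bound
    have herr : ∀ᶠ k in atTop,
        |(yy (φ k) (max t (εn (φ k))) - yy (φ k) (max s (εn (φ k)))) -
          ∫ u in s..t, F u (yy (φ k) (max u (εn (φ k))))| ≤ 2 * M * εn (φ k) := by
      filter_upwards [hev] with k hk
      set n := φ k with hn
      have hsm' : s ∈ Icc (εn n) τ := ⟨hk.le, hst.trans htτ⟩
      have htm' : t ∈ Icc (εn n) τ := ⟨(hk.trans_le hst).le, htτ⟩
      have hεm : εn n ∈ Icc (εn n) τ := ⟨le_refl _, hετ n⟩
      have hPs := stmt8_max_mem (τ := τ) hεm hsm' (hεpos n)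
      have hPt := stmt8_max_mem (τ := τ) hεm htm' (hεpos n)
      have hmaxs : max s (εn n) = s := max_eq_left hk.le
      have hmaxt : max t (εn n) = t := max_eq_left (hk.trans_le hst).le
      have hint : ∀ a ∈ Icc (εn n) τ, ∀ b ∈ Icc (εn n) τ,
          IntervalIntegrable (fun u => F u (yy n u)) volume a b := by
        intro a ha b hb
        exact ((hgc n).mono (Set.uIcc_subset_Icc ha hb)).intervalIntegrable
      have hd := hdiff n t htm' s hsm'
      -- split the integral
      have hadj1 := intervalIntegral.integral_add_adjacent_intervals
        (hint _ hPs _ hsm') (hint _ hsm' _ htm')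
      have hadj2 := intervalIntegral.integral_add_adjacent_intervals
        (hint _ hPs _ htm') (hint _ htm' _ hPt)
      -- identify the middle piece
      have hmid : (∫ u in s..t, F u (yy n u))
          = ∫ u in s..t, F u (yy n (max u (εn n))) := by
        apply intervalIntegral.integral_congr
        intro u hu
        rw [Set.uIcc_of_le hst] at hu
        show F u (yy n u) = F u (yy n (max u (εn n)))
        rw [max_eq_left (hk.le.trans hu.1)]
      have hb1 := stmt8_int_bound (τ := τ) hFb (hεpos n) (hgc n) (hgb n) hsm' hPs
      have hb2 := stmt8_int_bound (τ := τ) hFb (hεpos n) (hgc n) (hgb n) hPt htm'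
      have hPs_le : max (εn n) (s - εn n) ≤ s := max_le hsm'.1 (by linarith [hεpos n])
      have hPs_ge : s - εn n ≤ max (εn n) (s - εn n) := le_max_right _ _
      have he1 : |s - max (εn n) (s - εn n)| ≤ εn n := by
        rw [abs_of_nonneg (by linarith)]
        linarith
      have hPt_le : max (εn n) (t - εn n) ≤ t := max_le htm'.1 (by linarith [hεpos n])
      have hPt_ge : t - εn n ≤ max (εn n) (t - εn n) := le_max_right _ _
      have he2 : |max (εn n) (t - εn n) - t| ≤ εn n := by
        rw [abs_of_nonpos (by linarith)]
        linarith
      rw [hmaxs, hmaxt, hd, ← hmid]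
      have hsplit : (∫ u in (max (εn n) (s - εn n))..(max (εn n) (t - εn n)), F u (yy n u))
          - (∫ u in s..t, F u (yy n u))
          = (∫ u in (max (εn n) (s - εn n))..s, F u (yy n u))
            + ∫ u in t..(max (εn n) (t - εn n)), F u (yy n u) := by
        have h5 : (∫ u in (max (εn n) (s - εn n))..t, F u (yy n u))
            + ∫ u in t..(max (εn n) (t - εn n)), F u (yy n u)
            = ∫ u in (max (εn n) (s - εn n))..(max (εn n) (t - εn n)), F u (yy n u) :=
          intervalIntegral.integral_add_adjacent_intervals (hint _ hPs _ htm') (hint _ htm' _ hPt)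
        linarith [hadj1]
      rw [hsplit]
      calc |(∫ u in (max (εn n) (s - εn n))..s, F u (yy n u))
            + ∫ u in t..(max (εn n) (t - εn n)), F u (yy n u)|
          ≤ |∫ u in (max (εn n) (s - εn n))..s, F u (yy n u)|
            + |∫ u in t..(max (εn n) (t - εn n)), F u (yy n u)| := abs_add_le _ _
        _ ≤ M * |s - max (εn n) (s - εn n)| + M * |max (εn n) (t - εn n) - t| := add_le_add hb1 hb2
        _ ≤ M * εn n + M * εn n := add_le_add
            (mul_le_mul_of_nonneg_left he1 hM0) (mul_le_mul_of_nonneg_left he2 hM0)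
        _ = 2 * M * εn n := by ring
    -- pass to the limit
    have hL : Tendsto (fun k => (yy (φ k) (max t (εn (φ k))) - yy (φ k) (max s (εn (φ k)))) -
        ∫ u in s..t, F u (yy (φ k) (max u (εn (φ k))))) atTop
        (𝓝 ((Z t - Z s) - ∫ u in s..t, F u (Z u))) :=
      ((hptt t htm).sub (hptt s hsm)).sub hki
    have h2M : Tendsto (fun k => 2 * M * εn (φ k)) atTop (𝓝 0) := by
      have := hεφ.const_mul (2 * M)
      simpa using this
    have habs := hL.abs
    have hle : |(Z t - Z s) - ∫ u in s..t, F u (Z u)| ≤ 0 :=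
      le_of_tendsto_of_tendsto habs h2M herr
    have hzero := abs_nonpos_iff.mp hle
    linarith [hzero]
  -- the ODE for the limit function (with F)
  have hODE : ∀ t ∈ Set.Ioc 0 τ, HasDerivWithinAt Z (F t (Z t)) (Set.Ioc 0 τ) t := by
    intro t ht
    set s : ℝ := t / 2 with hsdef
    have hs0 : 0 < s := half_pos ht.1
    have hst : s < t := half_lt_self ht.1
    have hsτ : s ≤ τ := hst.le.trans ht.2
    have hgc' : ContinuousOn (fun u => F u (Z u)) (Icc s τ) :=
      hFc.comp (continuousOn_id.prodMk hZc.continuousOn)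
        (fun u hu => ⟨⟨hs0.trans_le hu.1, hu.2⟩, mem_univ _⟩)
    have heqset : ∀ r ∈ Icc s τ, Z s + ∫ u in s..r, F u (Z u) = Z r :=
      fun r hr => (hInt s r hs0 hr.1 hr.2).symm
    have htmem : t ∈ Icc s τ := ⟨hst.le, ht.2⟩
    rcases eq_or_lt_of_le ht.2 with htτ | htτ
    · -- t = τ : one-sided derivative
      subst htτ
      have hmem : Icc s t ∈ 𝓝[Iic t] t := Icc_mem_nhdsLE hst
      have hmem2 : Icc s t ∈ 𝓝[Set.Ioc 0 t] t :=
        mem_nhdsWithin.mpr ⟨Ioi s, isOpen_Ioi, hst, fun u hu => ⟨hu.1.le, hu.2.2⟩⟩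
      have hgint : IntervalIntegrable (fun u => F u (Z u)) volume s t := by
        apply ContinuousOn.intervalIntegrable
        rwa [Set.uIcc_of_le hst.le]
      have hmeas : StronglyMeasurableAtFilter (fun u => F u (Z u)) (𝓝[Iic t] t) :=
        ⟨Icc s t, hmem, hgc'.aestronglyMeasurable measurableSet_Icc⟩
      have hcw : ContinuousWithinAt (fun u => F u (Z u)) (Iic t) t :=
        (hgc' t htmem).mono_of_mem_nhdsWithin hmem
      have hftc := intervalIntegral.integral_hasDerivWithinAt_right (s := Iic t) (t := Iic t)
        hgint hmeas hcw
      have hd2 : HasDerivWithinAt (fun r => Z s + ∫ u in s..r, F u (Z u))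
          (F t (Z t)) (Set.Ioc 0 t) t :=
        (hftc.const_add (Z s)).mono (fun u hu => hu.2)
      exact hd2.congr_of_eventuallyEq
        (eventuallyEq_of_mem hmem2 (fun r hr => (heqset r hr).symm))
        ((heqset t htmem).symm)
    · -- t < τ : two-sided derivative
      have hnbhd : Icc s τ ∈ 𝓝 t := Icc_mem_nhds hst htτ
      have hgint : IntervalIntegrable (fun u => F u (Z u)) volume s t := by
        apply ContinuousOn.intervalIntegrable
        apply hgc'.mono
        rw [Set.uIcc_of_le hst.le]
        exact Icc_subset_Icc (le_refl _) ht.2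
      have hmeas : StronglyMeasurableAtFilter (fun u => F u (Z u)) (𝓝 t) :=
        ⟨Icc s τ, hnbhd, hgc'.aestronglyMeasurable measurableSet_Icc⟩
      have hct : ContinuousAt (fun u => F u (Z u)) t :=
        (hgc' t htmem).continuousAt hnbhd
      have hftc := intervalIntegral.integral_hasDerivAt_right hgint hmeas hct
      have hd2 : HasDerivWithinAt (fun r => Z s + ∫ u in s..r, F u (Z u))
          (F t (Z t)) (Set.Ioc 0 τ) t := ((hftc.const_add (Z s)).hasDerivWithinAt)
      exact hd2.congr_of_eventuallyEq
        (eventuallyEq_of_mem (mem_nhdsWithin_of_mem_nhds hnbhd)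
          (fun r hr => (heqset r hr).symm))
        ((heqset t htmem).symm)
  -- comparison with the lower function α
  have hge : ∀ t ∈ Icc 0 τ, α t ≤ Z t := by
    by_contra hcon
    push_neg at hcon
    obtain ⟨t0, ht0, hlt0⟩ := hcon
    have ht00 : 0 < t0 := by
      rcases eq_or_lt_of_le ht0.1 with h | h
      · exfalso; rw [← h, hα0, hZ0] at hlt0; exact lt_irrefl 0 hlt0
      · exact h
    set S : Set ℝ := {u | u ∈ Icc 0 t0 ∧ α u ≤ Z u} with hSdef
    have hS0 : (0:ℝ) ∈ S := ⟨⟨le_refl _, ht00.le⟩, by rw [hα0, hZ0]⟩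
    have hSb : BddAbove S := ⟨t0, fun u hu => hu.1.2⟩
    have hsub0 : Icc 0 t0 ⊆ Icc 0 τ := Icc_subset_Icc (le_refl _) ht0.2
    have hScl : IsClosed S := by
      have hhc : ContinuousOn (fun u => Z u - α u) (Icc 0 t0) :=
        (hZc.continuousOn).sub (hαc.mono hsub0)
      have : S = Icc 0 t0 ∩ (fun u => Z u - α u) ⁻¹' (Ici 0) := by
        ext u
        simp only [hSdef, mem_setOf_eq, mem_inter_iff, mem_preimage, mem_Ici, sub_nonneg]
      rw [this]
      exact hhc.preimage_isClosed_of_isClosed isClosed_Icc isClosed_Ici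
    set t1 : ℝ := sSup S with ht1def
    have ht1S : t1 ∈ S := hScl.csSup_mem ⟨0, hS0⟩ hSb
    have ht1t0 : t1 ≤ t0 := ht1S.1.2
    have ht10 : 0 ≤ t1 := ht1S.1.1
    have ht1lt : t1 < t0 := by
      rcases eq_or_lt_of_le ht1t0 with h | h
      · exfalso; rw [h] at ht1S; exact absurd ht1S.2 (not_le.2 hlt0)
      · exact h
    have hbelow : ∀ u, t1 < u → u ≤ t0 → Z u < α u := by
      intro u h1 h2
      by_contra h
      push_neg at h
      have : u ∈ S := ⟨⟨ht10.trans h1.le, h2⟩, h⟩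
      exact absurd (le_csSup hSb this) (not_le.2 h1)
    -- monotonicity of Z - α on [t1, t0]
    have hsub1 : Icc t1 t0 ⊆ Icc 0 τ := Icc_subset_Icc ht10 ht0.2
    have hder : ∀ u ∈ Ioo t1 t0, HasDerivAt (fun w => Z w - α w) (F u (Z u) - α' u) u := by
      intro u hu
      have hu0 : 0 < u := lt_of_le_of_lt ht10 hu.1
      have huτ' : u < τ := lt_of_lt_of_le hu.2 ht0.2
      have huτ : u ∈ Set.Ioc 0 τ := ⟨hu0, huτ'.le⟩
      have hyd : HasDerivAt Z (F u (Z u)) u :=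
        (hODE u huτ).hasDerivAt (Ioc_mem_nhds hu0 huτ')
      have hαdu : HasDerivAt α (α' u) u :=
        (hαd u huτ).hasDerivAt (Ioc_mem_nhds hu0 huτ')
      exact hyd.sub hαdu
    have hmono : MonotoneOn (fun w => Z w - α w) (Icc t1 t0) := by
      apply monotoneOn_of_deriv_nonneg (convex_Icc t1 t0)
      · exact (hZc.continuousOn).sub (hαc.mono hsub1)
      · intro u hu
        rw [interior_Icc] at hu
        exact ((hder u hu).differentiableAt).differentiableWithinAt
      · intro u hu
        rw [interior_Icc] at hu
        rw [(hder u hu).deriv]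
        have hu0 : 0 < u := lt_of_le_of_lt ht10 hu.1
        have huτ' : u < τ := lt_of_lt_of_le hu.2 ht0.2
        have hZu : Z u < α u := hbelow u hu.1 hu.2.le
        have hFeq : F u (Z u) = l u (α u) := by
          rw [hFdef]
          simp only []
          rw [max_eq_right hZu.le]
        rw [hFeq]
        have := hineq u ⟨hu0, huτ'⟩
        linarith
    have h1 : Z t1 - α t1 ≤ Z t0 - α t0 :=
      hmono (left_mem_Icc.mpr ht1lt.le) (right_mem_Icc.mpr ht1lt.le) ht1lt.le
    have h2 : (0:ℝ) ≤ Z t1 - α t1 := sub_nonneg.mpr ht1S.2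
    have h3 : Z t0 - α t0 < 0 := sub_neg.mpr hlt0
    linarith
  -- final assembly
  refine ⟨Z, hZc.continuousOn, hZ0, hge, ?_⟩
  intro t ht
  have h1 := hODE t ht
  have h2 : F t (Z t) = l t (Z t) := by
    rw [hFdef]
    simp only []
    rw [max_eq_left (hge t ⟨ht.1.le, ht.2⟩)]
  rwa [h2] at h1

end main


/-- existence of a solution to the singular ODE `y' = l(t,y)`, `y(0)=0`,
above a lower function `α`. -/
theorem stmt8 (τ : ℝ) (hτ : 0 < τ)
    (l : ℝ → ℝ → ℝ)
    (hlc : ContinuousOn (Function.uncurry l) (Set.Ioc 0 τ ×ˢ Set.Ioi 0))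
    (hlb : ∃ M : ℝ, ∀ t ∈ Set.Ioc 0 τ, ∀ y ∈ Set.Ioi (0:ℝ), |l t y| ≤ M)
    (α α' : ℝ → ℝ)
    (hαc : ContinuousOn α (Set.Icc 0 τ))
    (hαd : ∀ t ∈ Set.Ioc 0 τ, HasDerivWithinAt α (α' t) (Set.Ioc 0 τ) t)
    (hα'c : ContinuousOn α' (Set.Ioc 0 τ))
    (hα0 : α 0 = 0)
    (hαpos : ∀ t ∈ Set.Ioc 0 τ, 0 < α t)
    (hineq : ∀ t ∈ Set.Ioo 0 τ, α' t ≤ l t (α t)) :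
    ∃ y : ℝ → ℝ, ContinuousOn y (Set.Icc 0 τ) ∧ y 0 = 0 ∧
      (∀ t ∈ Set.Icc 0 τ, α t ≤ y t) ∧
      ∀ t ∈ Set.Ioc 0 τ, HasDerivWithinAt y (l t (y t)) (Set.Ioc 0 τ) t := by
  exact stmt8' τ hτ l hlc hlb α α' hαc hαd hα'c hα0 hαpos hineq
end ton
end

section
/- Let T > 0, θ > 0, and let a:[0,T)→ℝ be continuous with a(t) ≥ 0 for all t∈[0,T) and limsup_{t↑T} a(t)/(θ√(T−t)) < 1. Then the backward ODE (♦) admits a positive solution, i.e., there exists Y:[0,T]→[0,∞), absolutely continuous on [0,T], right-differentiable on [0,T) with right-continuous right derivative, with Y'₊(t) = −f(t,Y(t)) on [0,T), Y(T) = 0, and Y(t) > 0 for all t∈[0,T). -/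
open MeasureTheory Set Filter Topology

/-- Absolute continuity of `Y` on the interval `[a,b]` (classical ε–δ definition over
finite families of non-overlapping subintervals). -/
def AbsContOn (Y : ℝ → ℝ) (a b : ℝ) : Prop :=
  ∀ ε > (0:ℝ), ∃ δ > (0:ℝ), ∀ n : ℕ, ∀ I : Fin n → ℝ × ℝ,
    (∀ i, a ≤ (I i).1 ∧ (I i).1 ≤ (I i).2 ∧ (I i).2 ≤ b) →
    (∀ i j, i ≠ j → Disjoint (Set.Ioo (I i).1 (I i).2) (Set.Ioo (I j).1 (I j).2)) →
    (∑ i, ((I i).2 - (I i).1)) < δ →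
    (∑ i, |Y (I i).2 - Y (I i).1|) < ε

/-- The right-hand side `f(t,y) = θ² y/(√y + a(t))²` for `y>0`, with
`f(t,0) = θ²` if `a(t)=0` and `f(t,0) = 0` otherwise. -/
noncomputable def fODE (θ : ℝ) (a : ℝ → ℝ) (t y : ℝ) : ℝ :=
  if 0 < y then θ ^ 2 * y / (Real.sqrt y + a t) ^ 2
  else if a t = 0 then θ ^ 2 else 0

/-- A solution to the backward ODE (♦): `Y : [0,T] → [0,∞)` absolutely continuous,
right-differentiable on `[0,T)` with right-continuous right derivative,
`Y'₊(t) = −f(t,Y(t))` on `[0,T)`, and `Y(T) = 0`. -/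
def DiamondSol (T θ : ℝ) (a : ℝ → ℝ) (Y : ℝ → ℝ) : Prop :=
  (∀ t ∈ Set.Icc 0 T, 0 ≤ Y t) ∧
  AbsContOn Y 0 T ∧
  (∀ t ∈ Set.Ico 0 T, HasDerivWithinAt Y (-(fODE θ a t (Y t))) (Set.Ici t) t) ∧
  (∀ t ∈ Set.Ico 0 T,
      ContinuousWithinAt (fun s => fODE θ a s (Y s)) (Set.Ico t T) t) ∧
  Y T = 0


/-! ### Auxiliary machinery -/

noncomputable def gfun (θ α x : ℝ) : ℝ := θ^2*x/(Real.sqrt x + α)^2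

lemma gDeriv (θ α x : ℝ) (hα : 0 ≤ α) (hx : 0 < x) :
    HasDerivAt (fun y => θ^2*y/(Real.sqrt y + α)^2) (θ^2*α/(Real.sqrt x + α)^3) x := by
  have hs : 0 < Real.sqrt x := Real.sqrt_pos.mpr hx
  have hd : 0 < Real.sqrt x + α := by linarith
  have h1 : HasDerivAt Real.sqrt (1/(2*Real.sqrt x)) x := Real.hasDerivAt_sqrt hx.ne'
  have h2 : HasDerivAt (fun y => (Real.sqrt y + α)^2)
      ((2:ℕ)*(Real.sqrt x + α)^1*(1/(2*Real.sqrt x))) x := ((h1.add_const α).pow 2)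
  have h3 : HasDerivAt (fun y => θ^2*y) (θ^2) x := by
    simpa using (hasDerivAt_id x).const_mul (θ^2)
  have h4 := h3.div h2 (by positivity)
  refine h4.congr_deriv ?_
  have hx2 : x = Real.sqrt x ^ 2 := (Real.sq_sqrt hx.le).symm
  rw [hx2]
  generalize Real.sqrt x = s at hs hd ⊢
  rw [Real.sqrt_sq hs.le]
  field_simp
  ring

lemma gfun_nonneg (θ : ℝ) {α x : ℝ} (hα : 0 ≤ α) (hx : 0 ≤ x) : 0 ≤ gfun θ α x := by
  unfold gfun; positivity

lemma gfun_le (θ : ℝ) {α x : ℝ} (hα : 0 ≤ α) (hx : 0 < x) : gfun θ α x ≤ θ^2 := by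
  unfold gfun
  have hs : 0 < Real.sqrt x := Real.sqrt_pos.mpr hx
  have hxs : x = Real.sqrt x ^ 2 := (Real.sq_sqrt hx.le).symm
  have h2 : x ≤ (Real.sqrt x + α)^2 := by nlinarith
  rw [div_le_iff₀ (by positivity)]
  nlinarith [sq_nonneg θ]

lemma gfun_lip (θ : ℝ) {m α x y : ℝ} (hm : 0 < m) (hα : 0 ≤ α)
    (hx : m ≤ x) (hy : m ≤ y) : |gfun θ α x - gfun θ α y| ≤ θ^2/m * |x - y| := by
  have key : ∀ z ∈ Set.Ici m, HasDerivWithinAt (gfun θ α) (θ^2*α/(Real.sqrt z + α)^3)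
      (Set.Ici m) z := by
    intro z hz
    exact ((by
      have hz0 : 0 < z := lt_of_lt_of_le hm hz
      exact gDeriv θ α z hα hz0 : HasDerivAt (gfun θ α) _ z)).hasDerivWithinAt
  have bdd : ∀ z ∈ Set.Ici m, ‖θ^2*α/(Real.sqrt z + α)^3‖ ≤ θ^2/m := by
    intro z hz
    have hz0 : 0 < z := lt_of_lt_of_le hm hz
    have hs : 0 < Real.sqrt z := Real.sqrt_pos.mpr hz0
    have hzs : z = Real.sqrt z ^ 2 := (Real.sq_sqrt hz0.le).symm
    rw [Real.norm_eq_abs, abs_of_nonneg (by positivity)]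
    rw [div_le_div_iff₀ (by positivity) hm]
    have hd : 0 < Real.sqrt z + α := by linarith
    have hz2 : z ≤ (Real.sqrt z + α)^2 := by nlinarith
    have h3 : α * z ≤ (Real.sqrt z + α) * (Real.sqrt z + α)^2 :=
      mul_le_mul (by linarith) hz2 hz0.le hd.le
    calc θ^2*α*m ≤ θ^2*(α*z) := by
          have := mul_le_mul_of_nonneg_left (Set.mem_Ici.mp hz) (mul_nonneg (sq_nonneg θ) hα)
          nlinarith
      _ ≤ θ^2*((Real.sqrt z + α)*(Real.sqrt z + α)^2) :=
          mul_le_mul_of_nonneg_left h3 (sq_nonneg θ)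
      _ = θ^2*(Real.sqrt z + α)^3 := by ring
  have := Convex.norm_image_sub_le_of_norm_hasDerivWithin_le key bdd (convex_Ici m) hy hx
  simpa [Real.norm_eq_abs, abs_sub_comm] using this

lemma gfun_contOn {θ : ℝ} {A Z : ℝ → ℝ} {s : Set ℝ} (hA : ContinuousOn A s)
    (hZ : ContinuousOn Z s) (hA0 : ∀ τ ∈ s, 0 ≤ A τ) (hZ0 : ∀ τ ∈ s, 0 < Z τ) :
    ContinuousOn (fun τ => gfun θ (A τ) (Z τ)) s := by
  unfold gfun
  apply ContinuousOn.div (continuousOn_const.mul hZ) ((hZ.sqrt.add hA).pow 2)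
  intro τ hτ
  have h1 : 0 < Real.sqrt (Z τ) := Real.sqrt_pos.mpr (hZ0 τ hτ)
  have h2 := hA0 τ hτ
  simp only [Pi.pow_apply, Pi.add_apply]
  positivity

lemma gfun_contAt {θ α y₀ : ℝ} (hα : 0 ≤ α) (hy : 0 < y₀) :
    ContinuousAt (fun y => gfun θ α y) y₀ := by
  unfold gfun
  have h1 : 0 < Real.sqrt y₀ := Real.sqrt_pos.mpr hy
  apply ContinuousAt.div (by fun_prop)
    (((Real.continuous_sqrt.continuousAt).add continuousAt_const).pow 2)
  simp only [Pi.pow_apply, Pi.add_apply]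
  positivity

lemma field_lipschitz (θ : ℝ) {m α : ℝ} (hm : 0 < m) (hα : 0 ≤ α) :
    LipschitzOnWith (Real.toNNReal (θ^2/m)) (fun x => gfun θ α (max x m)) Set.univ := by
  apply LipschitzOnWith.of_dist_le_mul
  intro x _ y _
  rw [Real.dist_eq, Real.dist_eq, Real.coe_toNNReal _ (by positivity)]
  calc |gfun θ α (max x m) - gfun θ α (max y m)| ≤ θ^2/m * |max x m - max y m| :=
        gfun_lip θ hm hα (le_max_right x m) (le_max_right y m)
    _ ≤ θ^2/m * |x - y| :=
        mul_le_mul_of_nonneg_left (abs_max_sub_max_le_abs x y m) (by positivity)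

lemma exists_sol (θ : ℝ) {A : ℝ → ℝ} {ε T m : ℝ} (hε : 0 < ε) (hεT : ε < T)
    (hm : 0 < m) (hA : ContinuousOn A (Set.Icc ε T)) (hA0 : ∀ τ ∈ Set.Icc ε T, 0 ≤ A τ)
    (x₀ : ℝ) :
    ∃ X : ℝ → ℝ, X ε = x₀ ∧
      ∀ τ ∈ Set.Icc ε T, HasDerivWithinAt X (gfun θ (A τ) (max (X τ) m)) (Set.Icc ε T) τ := by
  set v : ℝ → ℝ → ℝ := fun τ x => gfun θ (A τ) (max x m) with hv
  have hpl : IsPicardLindelof v (tmin := ε) (tmax := T) ⟨ε, le_rfl, hεT.le⟩ x₀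
      (Real.toNNReal (θ^2*(T-ε)+1)) 0 (Real.toNNReal (θ^2)) (Real.toNNReal (θ^2/m)) := by
    constructor
    · intro t ht
      exact (field_lipschitz θ hm (hA0 t ht)).mono (Set.subset_univ _)
    · intro x _
      exact gfun_contOn hA continuousOn_const hA0
        (fun τ _ => lt_of_lt_of_le hm (le_max_right x m))
    · intro t ht x _
      rw [Real.norm_eq_abs, abs_of_nonneg (gfun_nonneg θ (hA0 t ht)
        (le_trans hm.le (le_max_right x m))), Real.coe_toNNReal _ (sq_nonneg θ)]
      exact gfun_le θ (hA0 t ht) (lt_of_lt_of_le hm (le_max_right x m))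
    · have hTε : 0 ≤ θ^2*(T-ε)+1 := by nlinarith [sq_nonneg θ]
      simp only [NNReal.coe_zero, sub_zero, tsub_zero, Real.coe_toNNReal _ (sq_nonneg θ),
        Real.coe_toNNReal _ hTε, sub_self]
      rw [max_eq_left (by linarith)]
      linarith
  obtain ⟨X, hX0, hXd⟩ := hpl.exists_eq_forall_mem_Icc_hasDerivWithinAt₀
  exact ⟨X, hX0, hXd⟩

lemma hasDeriv_Ici_of_Icc {X : ℝ → ℝ} {d α β t : ℝ} (ht : α ≤ t) (ht2 : t < β)
    (h : HasDerivWithinAt X d (Set.Icc α β) t) : HasDerivWithinAt X d (Set.Ici t) t := by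
  have h1 : HasDerivWithinAt X d (Set.Icc t β) t := h.mono (Set.Icc_subset_Icc ht le_rfl)
  have hs : Set.Icc t β =ᶠ[𝓝 t] Set.Ici t := by
    filter_upwards [gt_mem_nhds ht2] with σ hσ
    simp only [Set.mem_Icc, Set.mem_Ici, eq_iff_iff]
    exact ⟨fun h => h.1, fun h => ⟨h, hσ.le⟩⟩
  exact (hasDerivWithinAt_congr_set hs).mp h1

lemma eventually_gt_of_posderiv {D : ℝ → ℝ} {τ d : ℝ}
    (h : HasDerivWithinAt D d (Set.Ici τ) τ) (hd : 0 < d) :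
    ∀ᶠ σ in 𝓝[>] τ, D τ < D σ := by
  have h1 := hasDerivWithinAt_iff_tendsto_slope.mp h
  rw [Set.Ici_sdiff_left] at h1
  have h2 : ∀ᶠ σ in 𝓝[>] τ, 0 < slope D τ σ := h1.eventually (lt_mem_nhds hd)
  filter_upwards [h2, self_mem_nhdsWithin] with σ hs hσ
  rw [slope_def_field] at hs
  have hστ : 0 < σ - τ := sub_pos.mpr hσ
  have := mul_pos hs hστ
  rw [div_mul_cancel₀] at this
  · linarith
  · exact ne_of_gt hστ

lemma lower_barrier {D : ℝ → ℝ} {α β : ℝ}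
    (hc : ContinuousOn D (Set.Icc α β)) (h0 : 0 ≤ D α)
    (hstep : ∀ τ ∈ Set.Ico α β, D τ = 0 → ∃ d, 0 < d ∧ HasDerivWithinAt D d (Set.Ici τ) τ) :
    ∀ τ ∈ Set.Icc α β, 0 ≤ D τ := by
  by_contra hcon
  push_neg at hcon
  obtain ⟨τ₁, hτ₁, hD1⟩ := hcon
  set S : Set ℝ := {τ ∈ Set.Icc α τ₁ | 0 ≤ D τ} with hS
  have hαβ : α ≤ β := hτ₁.1.trans hτ₁.2
  have hsub : Set.Icc α τ₁ ⊆ Set.Icc α β := Set.Icc_subset_Icc le_rfl hτ₁.2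
  have hScl : IsClosed S := by
    have : ContinuousOn D (Set.Icc α τ₁) := hc.mono hsub
    exact this.preimage_isClosed_of_isClosed isClosed_Icc isClosed_Ici
  have hSne : S.Nonempty := ⟨α, ⟨le_rfl, hτ₁.1⟩, h0⟩
  have hSbd : BddAbove S := BddAbove.mono (fun x hx => hx.1) bddAbove_Icc
  set τs := sSup S with hτs
  have hτsS : τs ∈ S := hScl.csSup_mem hSne hSbd
  have hτsle : τs ≤ τ₁ := csSup_le hSne (fun x hx => hx.1.2)
  have hτslt : τs < τ₁ := lt_of_le_of_ne hτsle (by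
    intro h
    rw [h] at hτsS
    linarith [hτsS.2])
  have hpos : ∀ σ ∈ Set.Ioc τs τ₁, D σ < 0 := by
    intro σ hσ
    by_contra hges
    push_neg at hges
    have : σ ∈ S := ⟨⟨hτsS.1.1.trans hσ.1.le, hσ.2⟩, hges⟩
    have h2 := le_csSup hSbd this
    rw [← hτs] at h2
    linarith [hσ.1]
  have hτsIcc : τs ∈ Set.Icc α β := hsub hτsS.1
  have hle0 : D τs ≤ 0 := by
    have hten : Filter.Tendsto D (𝓝[Set.Ioc τs τ₁] τs) (𝓝 (D τs)) :=
      (hc τs hτsIcc).tendsto.mono_left (nhdsWithin_mono _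
        (fun x hx => ⟨hτsS.1.1.trans hx.1.le, hx.2.trans hτ₁.2⟩))
    haveI hne : (𝓝[Set.Ioc τs τ₁] τs).NeBot := by
      rw [nhdsWithin_Ioc_eq_nhdsGT hτslt]
      exact nhdsGT_neBot τs
    exact le_of_tendsto hten (eventually_nhdsWithin_of_forall
      (fun σ hσ => (hpos σ hσ).le))
  have hD0 : D τs = 0 := le_antisymm hle0 hτsS.2
  obtain ⟨d, hd, hdd⟩ := hstep τs ⟨hτsS.1.1, lt_of_lt_of_le hτslt hτ₁.2⟩ hD0
  have hev := eventually_gt_of_posderiv hdd hd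
  rw [hD0] at hev
  have hev2 : ∀ᶠ σ in 𝓝[>] τs, σ ∈ Set.Ioc τs τ₁ :=
    Ioc_mem_nhdsGT hτslt
  haveI : (𝓝[>] τs).NeBot := nhdsGT_neBot τs
  obtain ⟨σ, h1, h2⟩ := (hev.and hev2).exists
  linarith [hpos σ h2]

lemma ode_compare {v : ℝ → ℝ → ℝ} {K : NNReal} {α β : ℝ} {f g : ℝ → ℝ}
    (hv : ∀ t, LipschitzOnWith K (v t) Set.univ)
    (hf : ContinuousOn f (Set.Icc α β))
    (hf' : ∀ t ∈ Set.Ico α β, HasDerivWithinAt f (v t (f t)) (Set.Ici t) t)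
    (hg : ContinuousOn g (Set.Icc α β))
    (hg' : ∀ t ∈ Set.Ico α β, HasDerivWithinAt g (v t (g t)) (Set.Ici t) t)
    (h0 : f α ≤ g α) : ∀ τ ∈ Set.Icc α β, f τ ≤ g τ := by
  by_contra hcon
  push_neg at hcon
  obtain ⟨τ₁, hτ₁, hD1⟩ := hcon
  set D : ℝ → ℝ := fun τ => f τ - g τ with hD
  have hDc : ContinuousOn D (Set.Icc α β) := hf.sub hg
  set S : Set ℝ := {τ ∈ Set.Icc α τ₁ | D τ ≤ 0} with hS
  have hsub : Set.Icc α τ₁ ⊆ Set.Icc α β := Set.Icc_subset_Icc le_rfl hτ₁.2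
  have hScl : IsClosed S :=
    (hDc.mono hsub).preimage_isClosed_of_isClosed isClosed_Icc isClosed_Iic
  have hSne : S.Nonempty := ⟨α, ⟨le_rfl, hτ₁.1⟩, by simp [hD]; linarith⟩
  have hSbd : BddAbove S := BddAbove.mono (fun x hx => hx.1) bddAbove_Icc
  set τs := sSup S with hτs
  have hτsS : τs ∈ S := hScl.csSup_mem hSne hSbd
  have hτsle : τs ≤ τ₁ := csSup_le hSne (fun x hx => hx.1.2)
  have hτslt : τs < τ₁ := lt_of_le_of_ne hτsle (by
    intro h
    rw [h] at hτsS
    have := hτsS.2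
    simp only [hD] at this
    linarith)
  have hpos : ∀ σ ∈ Set.Ioc τs τ₁, 0 < D σ := by
    intro σ hσ
    by_contra hges
    push_neg at hges
    have hmem : σ ∈ S := ⟨⟨hτsS.1.1.trans hσ.1.le, hσ.2⟩, hges⟩
    have h2 := le_csSup hSbd hmem
    rw [← hτs] at h2
    linarith [hσ.1]
  have hτsIcc : τs ∈ Set.Icc α β := hsub hτsS.1
  have hge0 : 0 ≤ D τs := by
    have hten : Filter.Tendsto D (𝓝[Set.Ioc τs τ₁] τs) (𝓝 (D τs)) :=
      (hDc τs hτsIcc).tendsto.mono_left (nhdsWithin_mono _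
        (fun x hx => ⟨hτsS.1.1.trans hx.1.le, hx.2.trans hτ₁.2⟩))
    haveI hne : (𝓝[Set.Ioc τs τ₁] τs).NeBot := by
      rw [nhdsWithin_Ioc_eq_nhdsGT hτslt]
      exact nhdsGT_neBot τs
    exact ge_of_tendsto hten (eventually_nhdsWithin_of_forall
      (fun σ hσ => (hpos σ hσ).le))
  have heq : f τs = g τs := by
    have := hτsS.2
    simp only [hD] at this hge0
    linarith
  have hsub2 : Set.Icc τs τ₁ ⊆ Set.Icc α β := Set.Icc_subset_Icc hτsS.1.1 hτ₁.2
  have hsub3 : Set.Ico τs τ₁ ⊆ Set.Ico α β := Set.Ico_subset_Ico hτsS.1.1 hτ₁.2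
  have huniq := ODE_solution_unique_of_mem_Icc_right
    (v := v) (s := fun _ => Set.univ) (K := K)
    (fun t _ => (hv t))
    (hf.mono hsub2) (fun t ht => hf' t (hsub3 ht)) (fun t _ => Set.mem_univ _)
    (hg.mono hsub2) (fun t ht => hg' t (hsub3 ht)) (fun t _ => Set.mem_univ _)
    heq
  have := huniq ⟨hτslt.le, le_rfl⟩
  rw [this] at hD1
  linarith

lemma sqrt_lam_mul {lam sl θ τ : ℝ} (hsl : 0 ≤ sl) (hlam : lam = sl^2) (hθ : 0 < θ)
    (hτ : 0 ≤ τ) : Real.sqrt (lam*θ^2*τ) = sl*θ*Real.sqrt τ := by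
  rw [hlam]
  rw [show sl^2*θ^2*τ = (sl*θ)^2*τ by ring, Real.sqrt_mul (by positivity),
    Real.sqrt_sq (by positivity)]

lemma gfun_barrier {θ c sl lam α τ : ℝ} (hθ : 0 < θ) (hc : 0 ≤ c) (hc1 : c < 1)
    (hsl : sl = (1-c)/2) (hlam : lam = sl^2) (hτ : 0 < τ)
    (hα : 0 ≤ α) (hαb : α ≤ c*θ*Real.sqrt τ) :
    lam*θ^2 < gfun θ α (lam*θ^2*τ) := by
  have hsl0 : 0 < sl := by rw [hsl]; linarith
  have hlam0 : 0 < lam := by rw [hlam]; positivity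
  have hst : 0 < Real.sqrt τ := Real.sqrt_pos.mpr hτ
  have hτs : Real.sqrt τ ^ 2 = τ := Real.sq_sqrt hτ.le
  have hsq : Real.sqrt (lam*θ^2*τ) = sl*θ*Real.sqrt τ :=
    sqrt_lam_mul hsl0.le hlam hθ hτ.le
  unfold gfun
  rw [hsq]
  have hden : 0 < sl*θ*Real.sqrt τ + α := by positivity
  have hdb : (sl*θ*Real.sqrt τ + α)^2 ≤ (sl+c)^2*θ^2*τ := by
    have h1 : sl*θ*Real.sqrt τ + α ≤ (sl+c)*θ*Real.sqrt τ := by nlinarith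
    calc (sl*θ*Real.sqrt τ + α)^2 ≤ ((sl+c)*θ*Real.sqrt τ)^2 := by
          nlinarith [mul_self_le_mul_self hden.le h1]
      _ = (sl+c)^2*θ^2*τ := by rw [mul_pow, mul_pow, hτs]
  have hsc : (sl+c)^2 < 1 := by
    have : sl + c = (1+c)/2 := by rw [hsl]; ring
    rw [this]
    nlinarith
  have h2 : θ^2*(lam*θ^2*τ)/(sl*θ*Real.sqrt τ + α)^2 ≥ θ^2*(lam*θ^2*τ)/((sl+c)^2*θ^2*τ) := by
    apply div_le_div_of_nonneg_left _ (by positivity) hdb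
    positivity
  have h3 : θ^2*(lam*θ^2*τ)/((sl+c)^2*θ^2*τ) = lam*θ^2/(sl+c)^2 := by
    field_simp
  rw [h3] at h2
  have h4 : lam*θ^2 < lam*θ^2/(sl+c)^2 := by
    rw [lt_div_iff₀ (by positivity)]
    nlinarith [mul_pos (mul_pos hlam0 (pow_pos hθ 2)) (sub_pos.mpr hsc)]
  linarith

lemma absContOn_of_lip {Y : ℝ → ℝ} {α β C : ℝ} (hC : 0 ≤ C)
    (h : ∀ x ∈ Set.Icc α β, ∀ y ∈ Set.Icc α β, |Y y - Y x| ≤ C*|y-x|) :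
    AbsContOn Y α β := by
  intro ε hε
  refine ⟨ε/(C+1), by positivity, ?_⟩
  intro n I hI _ hsum
  have hterm : ∀ i : Fin n, |Y (I i).2 - Y (I i).1| ≤ C*((I i).2 - (I i).1) := by
    intro i
    obtain ⟨h1, h2, h3⟩ := hI i
    have hx1 : (I i).1 ∈ Set.Icc α β := ⟨h1, h2.trans h3⟩
    have hx2 : (I i).2 ∈ Set.Icc α β := ⟨h1.trans h2, h3⟩
    have := h _ hx1 _ hx2
    rwa [abs_of_nonneg (show (0:ℝ) ≤ (I i).2 - (I i).1 by linarith)] at this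
  calc (∑ i, |Y (I i).2 - Y (I i).1|) ≤ ∑ i, C*((I i).2 - (I i).1) :=
        Finset.sum_le_sum (fun i _ => hterm i)
    _ = C * ∑ i, ((I i).2 - (I i).1) := by rw [Finset.mul_sum]
    _ ≤ C * (ε/(C+1)) := mul_le_mul_of_nonneg_left hsum.le hC
    _ < ε := by
        rw [mul_div_assoc']
        rw [div_lt_iff₀ (by linarith)]
        nlinarith

/-- Construction of the approximate solution on `[ε, T]`, with all its properties. -/
lemma stage {θ c sl lam T τ₀ ε : ℝ} {A : ℝ → ℝ}
    (hθ : 0 < θ) (hc : 0 ≤ c) (hc1 : c < 1)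
    (hsl : sl = (1-c)/2) (hlam : lam = sl^2)
    (hε : 0 < ε) (hετ : ε ≤ τ₀) (hτT : τ₀ ≤ T) (hεT : ε < T)
    (hA0 : ∀ τ, 0 ≤ A τ) (hAc : ContinuousOn A (Icc ε T))
    (hAb : ∀ τ ∈ Icc ε τ₀, A τ ≤ c*θ*Real.sqrt τ) :
    ∃ X : ℝ → ℝ,
      X ε = lam*θ^2*ε ∧
      (∀ τ ∈ Icc ε T, HasDerivWithinAt X (gfun θ (A τ) (X τ)) (Icc ε T) τ) ∧
      ContinuousOn X (Icc ε T) ∧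
      MonotoneOn X (Icc ε T) ∧
      (∀ τ ∈ Icc ε T, lam*θ^2*min τ τ₀ ≤ X τ) ∧
      (∀ τ ∈ Icc ε T, X τ ≤ θ^2*τ) ∧
      (∀ σ ∈ Icc ε T, ∀ τ ∈ Icc ε T, |X τ - X σ| ≤ θ^2*|τ-σ|) := by
  have hsl0 : 0 < sl := by rw [hsl]; linarith
  have hlam0 : 0 < lam := by rw [hlam]; positivity
  have hlam1 : lam ≤ 1 := by rw [hlam, hsl]; nlinarith
  set m : ℝ := lam*θ^2*ε with hm
  have hm0 : 0 < m := by positivity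
  obtain ⟨X, hX0, hXd⟩ := exists_sol θ hε hεT hm0 hAc (fun τ _ => hA0 τ) m
  have hXc : ContinuousOn X (Icc ε T) := fun τ hτ => (hXd τ hτ).continuousWithinAt
  -- monotone
  have hXm : MonotoneOn X (Icc ε T) := by
    apply monotoneOn_of_deriv_nonneg (convex_Icc ε T) hXc
    · intro x hx
      rw [interior_Icc] at hx
      exact ((hXd x (Ioo_subset_Icc_self hx)).hasDerivAt
        (Icc_mem_nhds hx.1 hx.2)).differentiableAt.differentiableWithinAt
    · intro x hx
      rw [interior_Icc] at hx
      rw [((hXd x (Ioo_subset_Icc_self hx)).hasDerivAt (Icc_mem_nhds hx.1 hx.2)).deriv]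
      exact gfun_nonneg θ (hA0 x) (le_trans hm0.le (le_max_right _ _))
  -- above m
  have hXge : ∀ τ ∈ Icc ε T, m ≤ X τ := by
    intro τ hτ
    have := hXm (left_mem_Icc.mpr hεT.le) hτ hτ.1
    rw [hX0] at this
    exact this
  have hmax : ∀ τ ∈ Icc ε T, max (X τ) m = X τ := fun τ hτ => max_eq_left (hXge τ hτ)
  have hXd' : ∀ τ ∈ Icc ε T, HasDerivWithinAt X (gfun θ (A τ) (X τ)) (Icc ε T) τ := by
    intro τ hτ
    have := hXd τ hτ
    rwa [hmax τ hτ] at this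
  -- Lipschitz
  have hlip : ∀ σ ∈ Icc ε T, ∀ τ ∈ Icc ε T, |X τ - X σ| ≤ θ^2*|τ-σ| := by
    intro σ hσ τ hτ
    have := Convex.norm_image_sub_le_of_norm_hasDerivWithin_le
      (f := X) (f' := fun τ => gfun θ (A τ) (X τ)) (C := θ^2)
      (fun z hz => hXd' z hz) (fun z hz => by
        rw [Real.norm_eq_abs, abs_of_nonneg (gfun_nonneg θ (hA0 z)
          (le_trans hm0.le (hXge z hz)))]
        exact gfun_le θ (hA0 z) (lt_of_lt_of_le hm0 (hXge z hz)))
      (convex_Icc ε T) hσ hτ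
    simpa [Real.norm_eq_abs] using this
  -- upper bound
  have hub : ∀ τ ∈ Icc ε T, X τ ≤ θ^2*τ := by
    intro τ hτ
    have h1 := hlip ε (left_mem_Icc.mpr hεT.le) τ hτ
    rw [hX0, abs_of_nonneg (by linarith [hτ.1] : (0:ℝ) ≤ τ - ε)] at h1
    have h2 : X τ - m ≤ θ^2*(τ-ε) := (abs_le.mp h1).2
    have : m ≤ θ^2*ε := by nlinarith
    nlinarith
  -- lower barrier on [ε, τ₀]
  have hbarrier : ∀ τ ∈ Icc ε τ₀, lam*θ^2*τ ≤ X τ := by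
    intro τ hτ
    have hsubIcc : Icc ε τ₀ ⊆ Icc ε T := Icc_subset_Icc le_rfl hτT
    have hDc : ContinuousOn (fun τ => X τ - lam*θ^2*τ) (Icc ε τ₀) :=
      (hXc.mono hsubIcc).sub (by fun_prop)
    have key := lower_barrier (D := fun τ => X τ - lam*θ^2*τ) (α := ε) (β := τ₀)
      hDc (by show (0:ℝ) ≤ X ε - lam*θ^2*ε; rw [hX0]; simp [hm]) ?_ τ hτ
    · have key' : 0 ≤ X τ - lam*θ^2*τ := key
      linarith
    · intro σ hσ h0
      have hσT : σ ∈ Icc ε T := ⟨hσ.1, le_trans hσ.2.le hτT⟩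
      have h0' : X σ - lam*θ^2*σ = 0 := h0
      have hXσ : X σ = lam*θ^2*σ := by linarith
      refine ⟨gfun θ (A σ) (X σ) - lam*θ^2, ?_, ?_⟩
      · rw [hXσ]
        have := gfun_barrier (α := A σ) (τ := σ) hθ hc hc1 hsl hlam
          (lt_of_lt_of_le hε hσ.1) (hA0 σ) (hAb σ ⟨hσ.1, hσ.2.le⟩)
        linarith
      · have hIci : HasDerivWithinAt X (gfun θ (A σ) (X σ)) (Ici σ) σ :=
          hasDeriv_Ici_of_Icc hσ.1 (lt_of_lt_of_le hσ.2 hτT) (hXd' σ hσT)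
        exact (hIci.sub ((hasDerivAt_id σ).const_mul (lam*θ^2)).hasDerivWithinAt).congr_deriv (by simp)
  -- combined lower bound
  have hlb : ∀ τ ∈ Icc ε T, lam*θ^2*min τ τ₀ ≤ X τ := by
    intro τ hτ
    rcases le_total τ τ₀ with h | h
    · rw [min_eq_left h]
      exact hbarrier τ ⟨hτ.1, h⟩
    · rw [min_eq_right h]
      calc lam*θ^2*τ₀ ≤ X τ₀ := hbarrier τ₀ ⟨hετ, le_rfl⟩
        _ ≤ X τ := hXm ⟨hετ, hτT⟩ hτ h
  exact ⟨X, hX0, hXd', hXc, hXm, hlb, hub, hlip⟩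

theorem stmt10 (T θ : ℝ) (hT : 0 < T) (hθ : 0 < θ)
    (a : ℝ → ℝ) (hac : ContinuousOn a (Set.Ico 0 T))
    (ha0 : ∀ t ∈ Set.Ico 0 T, 0 ≤ a t)
    (hlimsup : ∃ c < (1:ℝ), ∀ᶠ t in 𝓝[<] T, a t / (θ * Real.sqrt (T - t)) ≤ c) :
    ∃ Y : ℝ → ℝ, DiamondSol T θ a Y ∧ ∀ t ∈ Set.Ico 0 T, 0 < Y t := by
  classical
  obtain ⟨c₀, hc₀1, hev₀⟩ := hlimsup
  set c := max c₀ 0 with hcdef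
  have hc : 0 ≤ c := le_max_right _ _
  have hc1 : c < 1 := max_lt hc₀1 one_pos
  have hev : ∀ᶠ t in 𝓝[<] T, a t / (θ * Real.sqrt (T - t)) ≤ c :=
    hev₀.mono fun t ht => ht.trans (le_max_left _ _)
  obtain ⟨l, hl, hsubl⟩ := mem_nhdsLT_iff_exists_Ioo_subset.mp hev
  have hlT : l < T := hl
  set t₁ : ℝ := max ((l+T)/2) (T/2) with ht₁def
  have ht₁T : t₁ < T := by
    apply max_lt <;> linarith
  have hlt₁ : l < t₁ := lt_of_lt_of_le (by linarith) (le_max_left _ _)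
  have ht₁0 : 0 < t₁ := lt_of_lt_of_le (by linarith) (le_max_right _ _)
  set τ₀ : ℝ := T - t₁ with hτ₀def
  have hτ₀ : 0 < τ₀ := by simp only [hτ₀def]; linarith
  have hτ₀T' : τ₀ < T := by simp only [hτ₀def]; linarith
  have hτ₀T : τ₀ ≤ T := hτ₀T'.le
  -- the reversed-time coefficient
  set A : ℝ → ℝ := fun τ => max (a (T - τ)) 0 with hAdef
  have hA0 : ∀ τ, 0 ≤ A τ := fun τ => le_max_right _ _
  have hAb : ∀ τ ∈ Set.Ioc 0 τ₀, A τ ≤ c*θ*Real.sqrt τ := by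
    intro τ hτ
    have hst : 0 < Real.sqrt τ := Real.sqrt_pos.mpr hτ.1
    have hmem : T - τ ∈ Set.Ioo l T := by
      constructor
      · have : τ ≤ τ₀ := hτ.2
        simp only [hτ₀def] at this
        linarith
      · linarith [hτ.1]
    have h1 := hsubl hmem
    simp only [Set.mem_setOf_eq] at h1
    rw [show T - (T - τ) = τ by ring] at h1
    rw [div_le_iff₀ (by positivity)] at h1
    apply max_le
    · calc a (T - τ) ≤ c * (θ * Real.sqrt τ) := h1
        _ = c*θ*Real.sqrt τ := by ring
    · positivity
  have hAcont : ∀ ε : ℝ, 0 < ε → ContinuousOn A (Set.Icc ε T) := by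
    intro ε hε
    apply ContinuousOn.sup _ continuousOn_const
    exact ContinuousOn.comp hac (by fun_prop)
      (fun τ hτ => ⟨by linarith [hτ.2], by linarith [hτ.1]⟩)
  -- constants
  set sl : ℝ := (1-c)/2 with hsldef
  set lam : ℝ := sl^2 with hlamdef
  have hsl0 : 0 < sl := by rw [hsldef]; linarith
  have hlam0 : 0 < lam := by rw [hlamdef]; positivity
  -- the sequence of starting times
  set e : ℕ → ℝ := fun n => τ₀ / (n+2) with hedef
  have he0 : ∀ n, 0 < e n := by
    intro n
    apply div_pos hτ₀
    positivity
  have heτ₀ : ∀ n, e n ≤ τ₀ := by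
    intro n
    apply div_le_self hτ₀.le
    have : (1:ℝ) ≤ (n:ℝ) + 2 := by
      have : (0:ℝ) ≤ (n:ℝ) := Nat.cast_nonneg n
      linarith
    linarith
  have heT : ∀ n, e n < T := fun n => lt_of_le_of_lt (heτ₀ n) hτ₀T'
  have hemono : ∀ n k, n ≤ k → e k ≤ e n := by
    intro n k hnk
    apply div_le_div_of_nonneg_left hτ₀.le (by positivity)
    have : (n:ℝ) ≤ (k:ℝ) := by exact_mod_cast hnk
    linarith
  have hesmall : ∀ δ : ℝ, 0 < δ → ∃ N, ∀ n ≥ N, e n ≤ δ := by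
    intro δ hδ
    obtain ⟨N, hN⟩ := exists_nat_ge (τ₀/δ)
    refine ⟨N, fun n hn => ?_⟩
    have h1 : (N:ℝ) ≤ n := by exact_mod_cast hn
    have h2 : τ₀/δ ≤ (n:ℝ) + 2 := by linarith
    rw [div_le_iff₀ hδ] at h2
    rw [hedef]
    rw [div_le_iff₀ (by positivity)]
    linarith
  -- stage solutions
  have hstages := fun n => stage (T := T) (A := A) hθ hc hc1 hsldef hlamdef (he0 n)
    (heτ₀ n) hτ₀T (heT n) hA0 (hAcont _ (he0 n))
    (fun τ hτ => hAb τ ⟨lt_of_lt_of_le (he0 n) hτ.1, hτ.2⟩)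
  choose X hX0 hXd hXc hXm hlb hub hlip using hstages
  -- lower bound by lam θ² e n on the whole interval
  have hXlow : ∀ n k, ∀ τ ∈ Set.Icc (e k) T, e n ≤ τ → lam*θ^2*(e n) ≤ X k τ := by
    intro n k τ hτ hen
    have h1 := hlb k τ hτ
    have h2 : e n ≤ min τ τ₀ := le_min hen (heτ₀ n)
    calc lam*θ^2*(e n) ≤ lam*θ^2*min τ τ₀ := by
          nlinarith [mul_le_mul_of_nonneg_left h2 (by positivity : (0:ℝ) ≤ lam*θ^2)]
      _ ≤ X k τ := h1
  -- monotonicity in n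
  have hcomp : ∀ n k, n ≤ k → ∀ τ ∈ Set.Icc (e n) T, X n τ ≤ X k τ := by
    intro n k hnk
    have hek : e k ≤ e n := hemono n k hnk
    set m : ℝ := lam*θ^2*(e n) with hmdef
    have hm0 : 0 < m := by rw [hmdef]; positivity
    have hsubk : Set.Icc (e n) T ⊆ Set.Icc (e k) T := Set.Icc_subset_Icc hek le_rfl
    apply ode_compare (v := fun τ x => gfun θ (A τ) (max x m))
      (K := Real.toNNReal (θ^2/m))
      (fun t => field_lipschitz θ hm0 (hA0 t))
      (hXc n) ?_ ((hXc k).mono hsubk) ?_ ?_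
    · intro t ht
      have htIcc : t ∈ Set.Icc (e n) T := ⟨ht.1, ht.2.le⟩
      have hmax : max (X n t) m = X n t :=
        max_eq_left (hXlow n n t htIcc ht.1)
      show HasDerivWithinAt (X n) (gfun θ (A t) (max (X n t) m)) (Set.Ici t) t
      rw [hmax]
      exact hasDeriv_Ici_of_Icc ht.1 ht.2 (hXd n t htIcc)
    · intro t ht
      have htIcc : t ∈ Set.Icc (e k) T := hsubk ⟨ht.1, ht.2.le⟩
      have hmax : max (X k t) m = X k t :=
        max_eq_left (hXlow n k t htIcc ht.1)
      show HasDerivWithinAt (X k) (gfun θ (A t) (max (X k t) m)) (Set.Ici t) t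
      rw [hmax]
      exact hasDeriv_Ici_of_Icc htIcc.1 ht.2 (hXd k t htIcc)
    · rw [hX0 n]
      exact hXlow n k (e n) ⟨hek, (heT n).le⟩ le_rfl
  -- the limit function
  set g : ℕ → ℝ → ℝ := fun n τ => if e n ≤ τ then X n τ else 0 with hgdef
  have hXpos : ∀ n, ∀ τ ∈ Set.Icc (e n) T, 0 < X n τ := by
    intro n τ hτ
    have := hXlow n n τ hτ hτ.1
    have h2 : 0 < lam*θ^2*(e n) := by positivity
    linarith
  have hgb : ∀ n, ∀ τ, 0 ≤ τ → τ ≤ T → g n τ ≤ θ^2*τ := by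
    intro n τ h0 hT'
    simp only [hgdef]
    split_ifs with h
    · exact hub n τ ⟨h, hT'⟩
    · positivity
  have hgnn : ∀ n τ, τ ≤ T → 0 ≤ g n τ := by
    intro n τ hT'
    simp only [hgdef]
    split_ifs with h
    · exact (hXpos n τ ⟨h, hT'⟩).le
    · exact le_rfl
  have hgmono : ∀ τ, τ ≤ T → Monotone (fun n => g n τ) := by
    intro τ hT'
    apply monotone_nat_of_le_succ
    intro n
    by_cases h1 : e n ≤ τ
    · have h2 : e (n+1) ≤ τ := (hemono n (n+1) (Nat.le_succ n)).trans h1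
      simp only [hgdef, if_pos h1, if_pos h2]
      exact hcomp n (n+1) (Nat.le_succ n) τ ⟨h1, hT'⟩
    · have : g n τ = 0 := by simp only [hgdef, if_neg h1]
      rw [this]
      exact hgnn (n+1) τ hT'
  set Xl : ℝ → ℝ := fun τ => ⨆ n, g n τ with hXldef
  have hbdd : ∀ τ, 0 ≤ τ → τ ≤ T → BddAbove (Set.range fun n => g n τ) := by
    intro τ h0 hT'
    refine ⟨θ^2*τ, ?_⟩
    rintro x ⟨n, rfl⟩
    exact hgb n τ h0 hT'
  have hXlle : ∀ τ, 0 ≤ τ → τ ≤ T → Xl τ ≤ θ^2*τ :=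
    fun τ h0 hT' => ciSup_le (fun n => hgb n τ h0 hT')
  have hXlge : ∀ n τ, 0 ≤ τ → τ ≤ T → g n τ ≤ Xl τ :=
    fun n τ h0 hT' => le_ciSup (hbdd τ h0 hT') n
  have hXl0 : Xl 0 = 0 := by
    have h0 : ∀ n, g n 0 = 0 := by
      intro n
      simp only [hgdef]
      rw [if_neg (by linarith [he0 n])]
    simp only [hXldef, h0, ciSup_const]
  have hXtend : ∀ τ, 0 < τ → τ ≤ T → Filter.Tendsto (fun n => X n τ) Filter.atTop (𝓝 (Xl τ)) := by
    intro τ h0 hT'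
    obtain ⟨N, hN⟩ := hesmall τ h0
    apply (tendsto_atTop_ciSup (hgmono τ hT') (hbdd τ h0.le hT')).congr'
    filter_upwards [Filter.eventually_ge_atTop N] with n hn
    simp only [hgdef]
    rw [if_pos (hN n hn)]
  have hXlpos : ∀ τ, 0 < τ → τ ≤ T → lam*θ^2*min τ τ₀ ≤ Xl τ := by
    intro τ h0 hT'
    obtain ⟨N, hN⟩ := hesmall τ h0
    have h1 := hXlge N τ h0.le hT'
    simp only [hgdef] at h1
    rw [if_pos (hN N le_rfl)] at h1
    exact le_trans (hlb N τ ⟨hN N le_rfl, hT'⟩) h1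
  have hXlpos' : ∀ τ, 0 < τ → τ ≤ T → 0 < Xl τ := by
    intro τ h0 hT'
    have := hXlpos τ h0 hT'
    have h2 : 0 < min τ τ₀ := lt_min h0 hτ₀
    nlinarith [mul_pos (mul_pos hlam0 (pow_pos hθ 2)) h2]
  have hXlnn : ∀ τ, 0 ≤ τ → τ ≤ T → 0 ≤ Xl τ := by
    intro τ h0 hT'
    exact le_trans (hgnn 0 τ hT') (hXlge 0 τ h0 hT')
  have hXlip : ∀ σ, σ ∈ Set.Icc (0:ℝ) T → ∀ τ, τ ∈ Set.Icc (0:ℝ) T →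
      |Xl τ - Xl σ| ≤ θ^2*|τ - σ| := by
    have key : ∀ σ ∈ Set.Icc (0:ℝ) T, ∀ τ ∈ Set.Icc (0:ℝ) T, 0 < σ → 0 < τ →
        |Xl τ - Xl σ| ≤ θ^2*|τ - σ| := by
      intro σ hσ τ hτ hσ0 hτ0
      have hmin : 0 < min σ τ := lt_min hσ0 hτ0
      obtain ⟨N, hN⟩ := hesmall (min σ τ) hmin
      have hb : ∀ᶠ n in Filter.atTop, |X n τ - X n σ| ≤ θ^2*|τ - σ| := by
        filter_upwards [Filter.eventually_ge_atTop N] with n hn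
        exact hlip n σ ⟨(hN n hn).trans (min_le_left _ _), hσ.2⟩
          τ ⟨(hN n hn).trans (min_le_right _ _), hτ.2⟩
      have ht : Filter.Tendsto (fun n => |X n τ - X n σ|) Filter.atTop
          (𝓝 |Xl τ - Xl σ|) :=
        ((hXtend τ hτ0 hτ.2).sub (hXtend σ hσ0 hσ.2)).abs
      exact le_of_tendsto ht hb
    intro σ hσ τ hτ
    rcases eq_or_lt_of_le hσ.1 with hσ0 | hσ0
    · rcases eq_or_lt_of_le hτ.1 with hτ0 | hτ0
      · rw [← hσ0, ← hτ0]
        simp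
      · rw [← hσ0, hXl0, sub_zero, sub_zero,
          abs_of_nonneg (hXlnn τ hτ.1 hτ.2), abs_of_nonneg hτ0.le]
        exact hXlle τ hτ.1 hτ.2
    · rcases eq_or_lt_of_le hτ.1 with hτ0 | hτ0
      · rw [← hτ0, hXl0, zero_sub, zero_sub, abs_neg, abs_neg,
          abs_of_nonneg (hXlnn σ hσ.1 hσ.2), abs_of_nonneg hσ0.le]
        exact hXlle σ hσ.1 hσ.2
      · exact key σ hσ τ hτ hσ0 hτ0
  have hXlc : ContinuousOn Xl (Set.Icc 0 T) := by
    have : LipschitzOnWith (Real.toNNReal (θ^2)) Xl (Set.Icc 0 T) := by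
      apply LipschitzOnWith.of_dist_le_mul
      intro x hx y hy
      rw [Real.dist_eq, Real.dist_eq, Real.coe_toNNReal _ (by positivity)]
      exact hXlip y hy x hx
    exact this.continuousOn
  -- the integral identity for the limit
  have hFTC : ∀ τ₁ τ₂ : ℝ, 0 < τ₁ → τ₁ ≤ τ₂ → τ₂ ≤ T →
      Xl τ₂ - Xl τ₁ = ∫ s in τ₁..τ₂, gfun θ (A s) (Xl s) := by
    intro τ₁ τ₂ h1 h12 h2T
    obtain ⟨N, hN⟩ := hesmall τ₁ h1
    have hAc12 : ContinuousOn A (Set.Icc τ₁ τ₂) :=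
      (hAcont τ₁ h1).mono (Set.Icc_subset_Icc le_rfl h2T)
    have hGncont : ∀ n, e n ≤ τ₁ → ContinuousOn (fun s => gfun θ (A s) (X n s))
        (Set.Icc τ₁ τ₂) := by
      intro n hen
      have hsub : Set.Icc τ₁ τ₂ ⊆ Set.Icc (e n) T := Set.Icc_subset_Icc hen h2T
      exact gfun_contOn hAc12 ((hXc n).mono hsub) (fun τ _ => hA0 τ)
        (fun s hs => hXpos n s (hsub hs))
    have hper : ∀ n, e n ≤ τ₁ →
        X n τ₂ - X n τ₁ = ∫ s in τ₁..τ₂, gfun θ (A s) (X n s) := by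
      intro n hen
      have hsub : Set.Icc τ₁ τ₂ ⊆ Set.Icc (e n) T := Set.Icc_subset_Icc hen h2T
      have hcont : ContinuousOn (X n) (Set.Icc τ₁ τ₂) := (hXc n).mono hsub
      have hint : IntervalIntegrable (fun s => gfun θ (A s) (X n s)) volume τ₁ τ₂ := by
        apply ContinuousOn.intervalIntegrable
        rw [Set.uIcc_of_le h12]
        exact hGncont n hen
      have hderiv : ∀ t ∈ Set.Ioo τ₁ τ₂,
          HasDerivWithinAt (X n) (gfun θ (A t) (X n t)) (Set.Ioi t) t := by
        intro t ht
        exact (hasDeriv_Ici_of_Icc (hen.trans ht.1.le) (lt_of_lt_of_le ht.2 h2T)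
          (hXd n t (hsub ⟨ht.1.le, ht.2.le⟩))).mono Set.Ioi_subset_Ici_self
      have := intervalIntegral.integral_eq_sub_of_hasDeriv_right_of_le h12 hcont hderiv hint
      linarith [this]
    have htint : Filter.Tendsto (fun n => ∫ s in τ₁..τ₂, gfun θ (A s) (X n s))
        Filter.atTop (𝓝 (∫ s in τ₁..τ₂, gfun θ (A s) (Xl s))) := by
      apply intervalIntegral.tendsto_integral_filter_of_dominated_convergence
        (bound := fun _ => θ^2)
      · filter_upwards [Filter.eventually_ge_atTop N] with n hn
        apply ContinuousOn.aestronglyMeasurable _ measurableSet_uIoc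
        have : Set.uIoc τ₁ τ₂ ⊆ Set.Icc τ₁ τ₂ := by
          rw [Set.uIoc_of_le h12]
          exact Set.Ioc_subset_Icc_self
        exact (hGncont n (hN n hn)).mono this
      · filter_upwards [Filter.eventually_ge_atTop N] with n hn
        apply Filter.Eventually.of_forall
        intro s hs
        rw [Set.uIoc_of_le h12] at hs
        have hsmem : s ∈ Set.Icc (e n) T :=
          ⟨(hN n hn).trans hs.1.le, hs.2.trans h2T⟩
        rw [Real.norm_eq_abs, abs_of_nonneg (gfun_nonneg θ (hA0 s) (hXpos n s hsmem).le)]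
        exact gfun_le θ (hA0 s) (hXpos n s hsmem)
      · exact intervalIntegrable_const
      · apply Filter.Eventually.of_forall
        intro s hs
        rw [Set.uIoc_of_le h12] at hs
        have hs0 : 0 < s := lt_of_lt_of_le h1 hs.1.le
        have hsT : s ≤ T := hs.2.trans h2T
        exact (gfun_contAt (hA0 s) (hXlpos' s hs0 hsT)).tendsto.comp (hXtend s hs0 hsT)
    have hlhs : Filter.Tendsto (fun n => X n τ₂ - X n τ₁) Filter.atTop
        (𝓝 (Xl τ₂ - Xl τ₁)) :=
      (hXtend τ₂ (lt_of_lt_of_le h1 h12) h2T).sub (hXtend τ₁ h1 (h12.trans h2T))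
    have hlhs2 : Filter.Tendsto (fun n => X n τ₂ - X n τ₁) Filter.atTop
        (𝓝 (∫ s in τ₁..τ₂, gfun θ (A s) (Xl s))) := by
      apply htint.congr'
      filter_upwards [Filter.eventually_ge_atTop N] with n hn
      exact (hper n (hN n hn)).symm
    exact tendsto_nhds_unique hlhs hlhs2
  -- left derivative of the limit
  have hderivXl : ∀ τ : ℝ, 0 < τ → τ ≤ T →
      HasDerivWithinAt Xl (gfun θ (A τ) (Xl τ)) (Set.Iic τ) τ := by
    intro τ hτ0 hτT
    set b : ℝ := τ/2 with hbdef
    have hb0 : 0 < b := by rw [hbdef]; linarith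
    have hbτ : b < τ := by rw [hbdef]; linarith
    have hbT : b ≤ T := by linarith
    set G : ℝ → ℝ := fun s => gfun θ (A s) (Xl s) with hGdef
    have hGc : ContinuousOn G (Set.Icc b T) := by
      apply gfun_contOn (hAcont b hb0)
        (hXlc.mono (Set.Icc_subset_Icc hb0.le le_rfl)) (fun s _ => hA0 s)
      intro s hs
      exact hXlpos' s (lt_of_lt_of_le hb0 hs.1) hs.2
    set Gt : ℝ → ℝ := fun s => G (min (max s b) T) with hGtdef
    have hmapsTo : ∀ s : ℝ, min (max s b) T ∈ Set.Icc b T :=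
      fun s => ⟨le_min (le_max_right s b) hbT, min_le_right _ _⟩
    have hGtc : Continuous Gt := hGc.comp_continuous (by fun_prop) hmapsTo
    have hGt_eq : ∀ s, b ≤ s → s ≤ T → Gt s = gfun θ (A s) (Xl s) := by
      intro s h1 h2
      simp only [hGtdef, hGdef]
      rw [max_eq_left h1, min_eq_left h2]
    have hXeq : ∀ σ ∈ Set.Icc b T, Xl σ = Xl b + ∫ s in b..σ, Gt s := by
      intro σ hσ
      have h1 := hFTC b σ hb0 hσ.1 hσ.2
      have h2 : (∫ s in b..σ, gfun θ (A s) (Xl s)) = ∫ s in b..σ, Gt s := by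
        apply intervalIntegral.integral_congr
        intro s hs
        rw [Set.uIcc_of_le hσ.1] at hs
        exact (hGt_eq s hs.1 (hs.2.trans hσ.2)).symm
      linarith [h1, h2.le, h2.ge]
    have hΦ : HasDerivAt (fun σ => Xl b + ∫ s in b..σ, Gt s) (Gt τ) τ :=
      HasDerivAt.const_add (Xl b) (hGtc.integral_hasStrictDerivAt b τ).hasDerivAt
    have h3 : HasDerivWithinAt Xl (Gt τ) (Set.Icc b τ) τ := by
      apply (hΦ.hasDerivWithinAt (s := Set.Icc b τ)).congr
      · intro σ hσ
        exact hXeq σ ⟨hσ.1, hσ.2.trans hτT⟩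
      · exact hXeq τ ⟨hbτ.le, hτT⟩
    have h4 : HasDerivWithinAt Xl (Gt τ) (Set.Iic τ) τ := by
      apply (hasDerivWithinAt_congr_set ?_).mp h3
      filter_upwards [lt_mem_nhds hbτ] with σ hσ
      simp only [Set.mem_Icc, Set.mem_Iic, eq_iff_iff]
      exact ⟨fun h => h.2, fun h => ⟨hσ.le, h⟩⟩
    have hGtτ : Gt τ = gfun θ (A τ) (Xl τ) := hGt_eq τ hbτ.le hτT
    rwa [hGtτ] at h4
  -- assemble the solution
  refine ⟨fun t => Xl (T - t), ⟨?_, ?_, ?_, ?_, ?_⟩, ?_⟩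
  · intro t ht
    exact hXlnn (T - t) (by linarith [ht.2]) (by linarith [ht.1])
  · apply absContOn_of_lip (C := θ^2) (by positivity)
    intro x hx y hy
    have := hXlip (T - x) ⟨by linarith [hx.2], by linarith [hx.1]⟩
      (T - y) ⟨by linarith [hy.2], by linarith [hy.1]⟩
    calc |Xl (T-y) - Xl (T-x)| ≤ θ^2*|(T-y) - (T-x)| := this
      _ = θ^2*|y - x| := by rw [show (T-y) - (T-x) = -(y-x) by ring, abs_neg]
  · intro t ht
    have hτmem : 0 < T - t := by linarith [ht.2]
    have hτT : T - t ≤ T := by linarith [ht.1]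
    have h1 := hderivXl (T - t) hτmem hτT
    have h2 : HasDerivWithinAt (fun s : ℝ => T - s) (-1) (Set.Ici t) t := by
      simpa using ((hasDerivAt_id t).const_sub T).hasDerivWithinAt (s := Set.Ici t)
    have hmaps : Set.MapsTo (fun s : ℝ => T - s) (Set.Ici t) (Set.Iic (T - t)) := by
      intro s hs
      simp only [Set.mem_Iic]
      have : t ≤ s := hs
      linarith
    have h3 := HasDerivWithinAt.comp t h1 h2 hmaps
    have hpos : 0 < Xl (T - t) := hXlpos' (T - t) hτmem hτT
    have hAT : A (T - t) = a t := by
      rw [hAdef]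
      simp only
      rw [show T - (T - t) = t by ring]
      exact max_eq_left (ha0 t ht)
    have heq : -(fODE θ a t (Xl (T - t))) = gfun θ (A (T-t)) (Xl (T-t)) * (-1) := by
      simp only [fODE, gfun, if_pos hpos, hAT]
      ring
    rw [heq]
    exact h3
  · intro t ht
    have hcont : ContinuousOn (fun s => gfun θ (a s) (Xl (T - s))) (Set.Ico t T) := by
      apply gfun_contOn (hac.mono (fun s hs => ⟨ht.1.trans hs.1, hs.2⟩))
      · apply hXlc.comp (by fun_prop)
        intro s hs
        exact ⟨by linarith [hs.2], by linarith [ht.1, hs.1]⟩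
      · intro s hs
        exact ha0 s ⟨ht.1.trans hs.1, hs.2⟩
      · intro s hs
        exact hXlpos' (T - s) (by linarith [hs.2]) (by linarith [ht.1, hs.1])
    have heqset : ∀ s ∈ Set.Ico t T, fODE θ a s (Xl (T - s)) = gfun θ (a s) (Xl (T - s)) := by
      intro s hs
      have hpos : 0 < Xl (T - s) :=
        hXlpos' (T - s) (by linarith [hs.2]) (by linarith [ht.1, hs.1])
      simp only [fODE, gfun, if_pos hpos]
    apply ContinuousWithinAt.congr (hcont t ⟨le_rfl, ht.2⟩) heqset
      (heqset t ⟨le_rfl, ht.2⟩)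
  · show Xl (T - T) = 0
    rw [sub_self]
    exact hXl0
  · intro t ht
    exact hXlpos' (T - t) (by linarith [ht.2]) (by linarith [ht.1])
end
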